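/- arXiv:1003.5346 — 6 statements merged into one kernel-verified Lean document; each statement's English description precedes it below -/
import Mathlib

section
/- If f : D → ℝ^n is a convex and strongly monotone map on an open convex set D ⊆ ℝ^m, then every matrix in the subdifferential ∂f(v) has all entries strictly positive, for each v ∈ D. -/
noncomputable section
open Filter Topology Set
open scoped Classical

/-- A square real matrix is *stable* if all of its orbits are bounded. -/
def MatStable {ι : Type*} [Fintype ι] [DecidableEq ι] (P : Matrix ι ι ℝ) : Prop :=
  ∀ x : ι → ℝ, ∃ c : ℝ, ∀ k : ℕ, ‖(P ^ k).mulVec x‖ ≤ c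

/-- Spectral radius of a real square matrix, via its complex spectrum. -/
def SpecRad {ι : Type*} [Fintype ι] (Q : Matrix ι ι ℝ) : ℝ :=
  haveI := Classical.decEq ι
  sSup {r : ℝ | ∃ μ : ℂ, μ ∈ spectrum ℂ (Q.map (fun a => (a : ℂ))) ∧ r = ‖μ‖}

/-- `i` has access to `j` in the digraph of the nonnegative matrix `P`. -/
def AccessM {n : ℕ} (P : Matrix (Fin n) (Fin n) ℝ) : Fin n → Fin n → Prop :=
  Relation.ReflTransGen (fun i j => 0 < P i j)

/-- `C` is a class of `P` (an equivalence class of mutual access). -/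
def IsClass {n : ℕ} (P : Matrix (Fin n) (Fin n) ℝ) (C : Set (Fin n)) : Prop :=
  ∃ i, C = {j | AccessM P i j ∧ AccessM P j i}

/-- Spectral radius of the principal submatrix `P_{CC}`. -/
def SpecRadOn {n : ℕ} (P : Matrix (Fin n) (Fin n) ℝ) (C : Set (Fin n)) : ℝ :=
  haveI : Fintype C := Fintype.ofFinite _
  SpecRad (Matrix.of fun i j : C => P i.1 j.1)

/-- A critical class of a stable nonnegative matrix. -/
def IsCriticalClass {n : ℕ} (P : Matrix (Fin n) (Fin n) ℝ) (C : Set (Fin n)) : Prop :=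
  IsClass P C ∧ SpecRadOn P C = 1

/-- The set of critical nodes of `P`. -/
def CriticalNodes {n : ℕ} (P : Matrix (Fin n) (Fin n) ℝ) : Set (Fin n) :=
  {i | ∃ C, IsCriticalClass P C ∧ i ∈ C}

/-- The subdifferential of `f` at `v` relative to the domain `D`. -/
def Subdiff {m n : ℕ} (f : (Fin m → ℝ) → (Fin n → ℝ)) (D : Set (Fin m → ℝ))
    (v : Fin m → ℝ) : Set (Matrix (Fin n) (Fin m) ℝ) :=
  {M | ∀ x ∈ D, M.mulVec (x - v) ≤ f x - f v}

/-- matrices in the subdifferential of a convex strongly monotone map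
have strictly positive entries. -/
theorem stmt3 {m n : ℕ} (D : Set (Fin m → ℝ)) (hDo : IsOpen D) (hDc : Convex ℝ D)
    (f : (Fin m → ℝ) → (Fin n → ℝ))
    (hconv : ∀ i, ConvexOn ℝ D (fun x => f x i))
    (hsmono : ∀ x ∈ D, ∀ y ∈ D, x ≤ y → x ≠ y → ∀ i, f x i < f y i)
    (v : Fin m → ℝ) (hv : v ∈ D)
    (M : Matrix (Fin n) (Fin m) ℝ) (hM : M ∈ Subdiff f D v) :
    ∀ i j, 0 < M i j := by
  intro i j
  obtain ⟨ε, hε, hball⟩ := Metric.isOpen_iff.mp hDo v hv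
  set t : ℝ := ε / 2 with ht
  have htpos : 0 < t := by positivity
  set x : Fin m → ℝ := v - t • (Pi.single j 1 : Fin m → ℝ) with hx
  have hxD : x ∈ D := by
    apply hball
    rw [Metric.mem_ball, dist_eq_norm]
    have : x - v = -(t • (Pi.single j 1 : Fin m → ℝ)) := by simp [hx]
    rw [this, norm_neg, norm_smul, Real.norm_eq_abs, abs_of_pos htpos]
    have h1 : ‖(Pi.single j 1 : Fin m → ℝ)‖ ≤ 1 := by
      apply pi_norm_le_iff_of_nonneg zero_le_one |>.mpr
      intro k
      rcases eq_or_ne k j with rfl | hk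
      · simp
      · simp [Pi.single_eq_of_ne hk]
    calc t * ‖(Pi.single j 1 : Fin m → ℝ)‖ ≤ t * 1 := by
          exact mul_le_mul_of_nonneg_left h1 htpos.le
      _ < ε := by rw [mul_one]; exact half_lt_self hε
  have hle : x ≤ v := by
    intro k
    simp only [hx, Pi.sub_apply, Pi.smul_apply, smul_eq_mul]
    rcases eq_or_ne k j with rfl | hk
    · simp; linarith
    · simp [Pi.single_eq_of_ne hk]
  have hne : x ≠ v := by
    intro h
    have := congrFun h j
    simp [hx] at this
    linarith
  have hlt : f x i < f v i := hsmono x hxD v hv hle hne i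
  have hsub := hM x hxD i
  have hmv : M.mulVec (x - v) i = -t * M i j := by
    have hxv : x - v = -(t • (Pi.single j 1 : Fin m → ℝ)) := by simp [hx]
    rw [hxv]
    simp only [Matrix.mulVec, dotProduct]
    rw [Finset.sum_eq_single j]
    · simp [mul_comm]
    · intro k _ hk
      simp [Pi.single_eq_of_ne hk]
    · simp
  rw [hmv] at hsub
  have : -t * M i j < 0 := lt_of_le_of_lt hsub (by simpa using hlt)
  nlinarith
end
end

section
/- Let f : D → D be a convex monotone map on an open convex set D ⊆ ℝ^n with a fixed point v. If there exists a neighbourhood V ⊆ D of v such that every orbit of every point of V under f is bounded, then v is a Lyapunov stable fixed point of f. -/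
noncomputable section
open Filter Topology Set
open scoped Classical

/-- for a convex monotone self-map of an open convex set with a fixed
point v, if all orbits of points in some neighbourhood of v are bounded, then v is a
Lyapunov stable fixed point. -/
theorem stmt4 {n : ℕ} (D : Set (Fin n → ℝ)) (hDo : IsOpen D) (hDc : Convex ℝ D)
    (f : (Fin n → ℝ) → (Fin n → ℝ)) (hmaps : Set.MapsTo f D D)
    (hconv : ∀ i, ConvexOn ℝ D (fun x => f x i))
    (hmono : ∀ x ∈ D, ∀ y ∈ D, x ≤ y → f x ≤ f y)
    (v : Fin n → ℝ) (hv : v ∈ D) (hfix : f v = v)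
    (V : Set (Fin n → ℝ)) (hV : V ∈ 𝓝 v) (hVD : V ⊆ D)
    (hbdd : ∀ x ∈ V, ∃ c : ℝ, ∀ k : ℕ, ‖f^[k] x‖ ≤ c) :
    ∀ U ∈ 𝓝 v, ∃ W ∈ 𝓝 v, W ⊆ D ∧ ∀ x ∈ W, ∀ k : ℕ, 1 ≤ k → f^[k] x ∈ U := by
  intro U hU
  obtain ⟨δ, hδpos, hδV⟩ := Metric.nhds_basis_closedBall.mem_iff.mp hV
  obtain ⟨ε, hεpos, hεU⟩ := Metric.nhds_basis_closedBall.mem_iff.mp hU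
  -- helper: membership in D via the δ-ball
  have hmemV : ∀ w : Fin n → ℝ, (∀ i, |w i - v i| ≤ δ) → w ∈ V := by
    intro w hw
    apply hδV
    rw [Metric.mem_closedBall, dist_pi_le_iff hδpos.le]
    intro i
    rw [Real.dist_eq]; exact hw i
  have hmemD : ∀ w : Fin n → ℝ, (∀ i, |w i - v i| ≤ δ) → w ∈ D := fun w hw => hVD (hmemV w hw)
  set b : Fin n → ℝ := fun i => v i + δ with hbdef
  have hbV : b ∈ V := hmemV b (fun i => by simp [hbdef, abs_of_nonneg hδpos.le])
  have hbD : b ∈ D := hVD hbV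
  obtain ⟨c, hc⟩ := hbdd b hbV
  have hc0 : 0 ≤ c := le_trans (norm_nonneg _) (hc 0)
  set C : ℝ := c + ‖v‖ + δ with hCdef
  have hCδ : δ ≤ C := by have := norm_nonneg v; simp only [hCdef]; linarith
  have hC0 : 0 < C := lt_of_lt_of_le hδpos hCδ
  set t : ℝ := min ε δ / C with htdef
  have ht0 : 0 < t := div_pos (lt_min hεpos hδpos) hC0
  have ht1 : t ≤ 1 := by
    rw [htdef, div_le_one hC0]; exact le_trans (min_le_right _ _) hCδ
  have htC : t * C = min ε δ := div_mul_cancel₀ _ (ne_of_gt hC0)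
  have hiterD : ∀ k, ∀ x ∈ D, f^[k] x ∈ D := fun k x hx => hmaps.iterate k hx
  have hiterMono : ∀ k, ∀ x ∈ D, ∀ y ∈ D, x ≤ y → f^[k] x ≤ f^[k] y := by
    intro k
    induction k with
    | zero => intro x _ y _ h; simpa using h
    | succ k ih =>
      intro x hx y hy h
      rw [Function.iterate_succ_apply', Function.iterate_succ_apply']
      exact hmono _ (hiterD k x hx) _ (hiterD k y hy) (ih x hx y hy h)
  have hvfix : ∀ k, f^[k] v = v := fun k => Function.iterate_fixed hfix k
  -- bound on the orbit of b
  have hub : ∀ k i, f^[k] b i - v i ≤ C := by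
    intro k i
    have h1 : |f^[k] b i| ≤ c := by
      calc |f^[k] b i| = ‖f^[k] b i‖ := (Real.norm_eq_abs _).symm
        _ ≤ ‖f^[k] b‖ := norm_le_pi_norm _ i
        _ ≤ c := hc k
    have h2 : |v i| ≤ ‖v‖ := by
      calc |v i| = ‖v i‖ := (Real.norm_eq_abs _).symm
        _ ≤ ‖v‖ := norm_le_pi_norm _ i
    have := abs_le.mp h1
    have := abs_le.mp h2
    simp only [hCdef]; linarith [this.1, this.2, (abs_le.mp h1).1]
  set bt : Fin n → ℝ := fun i => v i + t * δ with hbtdef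
  set at' : Fin n → ℝ := fun i => v i - t * δ with hatdef
  have htδδ : t * δ ≤ δ := by
    nlinarith [hδpos.le, ht0.le]
  have hbtD : bt ∈ D := hmemD bt (fun i => by
    simp only [hbtdef, add_sub_cancel_left, abs_of_nonneg (mul_nonneg ht0.le hδpos.le)]
    exact htδδ)
  have hatD : at' ∈ D := hmemD at' (fun i => by
    simp only [hatdef, sub_sub_cancel_left, abs_neg,
      abs_of_nonneg (mul_nonneg ht0.le hδpos.le)]
    exact htδδ)
  -- upper induction
  have hupper : ∀ k, v ≤ f^[k] bt ∧ ∀ i, f^[k] bt i ≤ v i + t * (f^[k] b i - v i) := by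
    intro k
    induction k with
    | zero =>
      constructor
      · intro i; simp [hbtdef]; positivity
      · intro i; simp [hbtdef, hbdef]
    | succ k ih =>
      obtain ⟨hvy, hyp⟩ := ih
      set y := f^[k] bt with hydef
      have hyD : y ∈ D := hiterD k bt hbtD
      set p : Fin n → ℝ := fun i => v i + t * (f^[k] b i - v i) with hpdef
      have hpeq : p = (1 - t) • v + t • (f^[k] b) := by
        funext i; simp [hpdef]; ring
      have hpD : p ∈ D := by
        rw [hpeq]
        exact hDc hv (hiterD k b hbD) (by linarith) ht0.le (by ring)
      have h1 : f y ≤ f p := hmono y hyD p hpD hyp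
      have h2 : ∀ i, f p i ≤ v i + t * (f^[k + 1] b i - v i) := by
        intro i
        have := (hconv i).2 hv (hiterD k b hbD) (by linarith : (0:ℝ) ≤ 1 - t) ht0.le
          (by ring : (1 - t) + t = 1)
        rw [← hpeq] at this
        simp only [smul_eq_mul] at this
        calc f p i ≤ (1 - t) * f v i + t * f (f^[k] b) i := this
          _ = v i + t * (f^[k + 1] b i - v i) := by
              rw [hfix, Function.iterate_succ_apply']; ring
      have h3 : v ≤ f y := by
        have := hmono v hv y hyD hvy
        rw [hfix] at this; exact this
      rw [Function.iterate_succ_apply']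
      exact ⟨h3, fun i => le_trans (h1 i) (h2 i)⟩
  -- the displacement is small
  have hsmall : ∀ k i, f^[k] bt i - v i ≤ min ε δ := by
    intro k i
    have h1 := (hupper k).2 i
    have h2 : t * (f^[k] b i - v i) ≤ t * C := by
      apply mul_le_mul_of_nonneg_left (hub k i) ht0.le
    rw [htC] at h2; linarith
  have hsmall0 : ∀ k i, 0 ≤ f^[k] bt i - v i := fun k i => by
    have := (hupper k).1 i; linarith
  -- lower induction
  have hlower : ∀ k, f^[k] at' ≤ v ∧ ∀ i, v i - (f^[k] bt i - v i) ≤ f^[k] at' i := by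
    intro k
    induction k with
    | zero =>
      constructor
      · intro i; simp [hatdef]; positivity
      · intro i; simp [hatdef, hbtdef]
    | succ k ih =>
      obtain ⟨hyv, hyl⟩ := ih
      set y := f^[k] at' with hydef
      have hyD : y ∈ D := hiterD k at' hatD
      set q := f^[k] bt with hqdef
      have hqD : q ∈ D := hiterD k bt hbtD
      set w : Fin n → ℝ := fun i => 2 * v i - q i with hwdef
      have hwD : w ∈ D := by
        apply hmemD
        intro i
        have h1 := hsmall k i
        have h2 := hsmall0 k i
        simp only [hwdef]
        rw [abs_le]
        constructor
        · have := min_le_right ε δ; simp only [hqdef] at h1 h2 ⊢; linarith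
        · simp only [hqdef] at h1 h2 ⊢; linarith [hδpos.le]
      have hwy : w ≤ y := by
        intro i
        have := hyl i
        simp only [hwdef]; linarith
      have h1 : f w ≤ f y := hmono w hwD y hyD hwy
      have h2 : ∀ i, v i - (f q i - v i) ≤ f w i := by
        intro i
        have hmid : (1/2 : ℝ) • w + (1/2 : ℝ) • q = v := by
          funext j; simp [hwdef]; ring
        have := (hconv i).2 hwD hqD (by norm_num : (0:ℝ) ≤ 1/2) (by norm_num : (0:ℝ) ≤ 1/2)
          (by norm_num : (1/2 : ℝ) + 1/2 = 1)
        rw [hmid] at this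
        simp only [smul_eq_mul, hfix] at this
        linarith
      have h3 : f y ≤ v := by
        have := hmono y hyD v hv hyv
        rw [hfix] at this; exact this
      rw [Function.iterate_succ_apply']
      refine ⟨h3, fun i => ?_⟩
      have := h2 i
      have hq' : f^[k+1] bt i = f q i := by rw [Function.iterate_succ_apply']
      rw [hq']
      exact le_trans this (h1 i)
  -- conclude
  refine ⟨Metric.closedBall v (t * δ), Metric.closedBall_mem_nhds v (mul_pos ht0 hδpos), ?_, ?_⟩
  · intro x hx
    apply hmemD
    intro i
    rw [Metric.mem_closedBall, dist_pi_le_iff (mul_pos ht0 hδpos).le] at hx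
    have := hx i
    rw [Real.dist_eq] at this
    linarith
  · intro x hx k _
    rw [Metric.mem_closedBall, dist_pi_le_iff (mul_pos ht0 hδpos).le] at hx
    have hxi : ∀ i, |x i - v i| ≤ t * δ := by
      intro i; have := hx i; rwa [Real.dist_eq] at this
    have hax : at' ≤ x := fun i => by have := abs_le.mp (hxi i); simp [hatdef]; linarith [this.1]
    have hxb : x ≤ bt := fun i => by have := abs_le.mp (hxi i); simp [hbtdef]; linarith [this.2]
    have hxD : x ∈ D := hmemD x (fun i => le_trans (hxi i) htδδ)
    have hl := hiterMono k at' hatD x hxD hax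
    have hr := hiterMono k x hxD bt hbtD hxb
    apply hεU
    rw [Metric.mem_closedBall, dist_pi_le_iff hεpos.le]
    intro i
    rw [Real.dist_eq, abs_le]
    have h1 := hsmall k i
    have h2 := (hlower k).2 i
    have h3 := hl i
    have h4 := hr i
    have hεmin := min_le_left ε δ
    constructor <;> linarith
end
end

section
/- Let f : D → D be a convex monotone map with fixed point v (D ⊆ ℝ^n open convex). If some P ∈ ∂f(v) is stable, then every orbit of f'_v is bounded from below; consequently every orbit of f itself is bounded from below. -/
noncomputable section
open Filter Topology Set
open scoped Classical

/-- if some matrix in the subdifferential of f at a fixed point v is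
stable, then every orbit of the directional derivative map is bounded from below,
and consequently every orbit of f is bounded from below. -/
theorem stmt6 {n : ℕ} (D : Set (Fin n → ℝ)) (hDo : IsOpen D) (hDc : Convex ℝ D)
    (f : (Fin n → ℝ) → (Fin n → ℝ)) (hmaps : Set.MapsTo f D D)
    (hconv : ∀ i, ConvexOn ℝ D (fun x => f x i))
    (hmono : ∀ x ∈ D, ∀ y ∈ D, x ≤ y → f x ≤ f y)
    (v : Fin n → ℝ) (hv : v ∈ D) (hfix : f v = v)
    (g : (Fin n → ℝ) → (Fin n → ℝ))
    (hg : ∀ y : Fin n → ℝ,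
      Tendsto (fun ε : ℝ => ε⁻¹ • (f (v + ε • y) - f v)) (𝓝[>] (0:ℝ)) (𝓝 (g y)))
    (P : Matrix (Fin n) (Fin n) ℝ) (hP : P ∈ Subdiff f D v) (hPstab : MatStable P) :
    (∀ x : Fin n → ℝ, ∃ l : Fin n → ℝ, ∀ k : ℕ, l ≤ g^[k] x) ∧
    (∀ x ∈ D, ∃ l : Fin n → ℝ, ∀ k : ℕ, l ≤ f^[k] x) := by
  -- eventually v + ε • y ∈ D
  have hev : ∀ y : Fin n → ℝ, ∀ᶠ ε in 𝓝[>] (0:ℝ), v + ε • y ∈ D := by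
    intro y
    have hc : ContinuousAt (fun ε : ℝ => v + ε • y) 0 := by fun_prop
    have := hc.eventually_mem (hDo.mem_nhds (by simpa using hv))
    exact nhdsWithin_le_nhds this
  -- P is entrywise nonnegative
  have hPnn : ∀ i j, 0 ≤ P i j := by
    intro i j
    set e : Fin n → ℝ := Pi.single j (1:ℝ) with he
    have hsnn : ∀ i', 0 ≤ e i' := by
      intro i'; by_cases h : i' = j <;> simp [he, Pi.single_apply, h]
    have hc : ContinuousAt (fun ε : ℝ => v - ε • e) 0 := by fun_prop
    have hev2 : ∀ᶠ ε in 𝓝[>] (0:ℝ), v - ε • e ∈ D :=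
      nhdsWithin_le_nhds (hc.eventually_mem (hDo.mem_nhds (by simpa using hv)))
    obtain ⟨ε, hεD, hε'⟩ := (hev2.and self_mem_nhdsWithin).exists
    have hε : (0:ℝ) < ε := hε'
    set x := v - ε • e with hx
    have hxle : x ≤ v := by
      intro i'
      simp only [hx, Pi.sub_apply, Pi.smul_apply, smul_eq_mul]
      nlinarith [hsnn i']
    have hfle : f x ≤ f v := hmono x hεD v hv hxle
    have h1 := hP x hεD i
    have hxv : x - v = (-ε) • e := by
      rw [hx]; module
    rw [hxv] at h1
    have h2 : P.mulVec ((-ε) • e) i = -ε * P i j := by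
      rw [Matrix.mulVec_smul]
      simp [he, Matrix.mulVec_single]
    rw [h2] at h1
    simp only [Pi.sub_apply] at h1
    have h3 : f x i - f v i ≤ 0 := by
      have := hfle i; simpa using sub_nonpos.mpr this
    nlinarith [hε, h3]
  -- monotone mulVec
  have hPmono : ∀ y y' : Fin n → ℝ, y ≤ y' → P.mulVec y ≤ P.mulVec y' := by
    intro y y' h i
    simp only [Matrix.mulVec, dotProduct]
    exact Finset.sum_le_sum fun j _ => mul_le_mul_of_nonneg_left (h j) (hPnn i j)
  -- g y ≥ P.mulVec y
  have hgP : ∀ y : Fin n → ℝ, P.mulVec y ≤ g y := by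
    intro y
    have hevle : ∀ᶠ ε in 𝓝[>] (0:ℝ), P.mulVec y ≤ ε⁻¹ • (f (v + ε • y) - f v) := by
      filter_upwards [hev y, self_mem_nhdsWithin] with ε hεD (hε : 0 < ε)
      have h1 := hP _ hεD
      have h2 : v + ε • y - v = ε • y := by module
      rw [h2, Matrix.mulVec_smul] at h1
      have h3 := smul_le_smul_of_nonneg_left h1 (inv_nonneg.mpr hε.le)
      rwa [smul_smul, inv_mul_cancel₀ hε.ne', one_smul] at h3
    exact ge_of_tendsto (hg y) hevle
  -- g monotone
  have hgmono : ∀ y y' : Fin n → ℝ, y ≤ y' → g y ≤ g y' := by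
    intro y y' h
    have hevle : ∀ᶠ ε in 𝓝[>] (0:ℝ),
        ε⁻¹ • (f (v + ε • y) - f v) ≤ ε⁻¹ • (f (v + ε • y') - f v) := by
      filter_upwards [hev y, hev y', self_mem_nhdsWithin] with ε h1 h2 (hε : 0 < ε)
      have hle : v + ε • y ≤ v + ε • y' := by
        intro i
        simp only [Pi.add_apply, Pi.smul_apply, smul_eq_mul]
        nlinarith [h i]
      exact smul_le_smul_of_nonneg_left
        (sub_le_sub_right (hmono _ h1 _ h2 hle) _) (inv_nonneg.mpr hε.le)
    exact le_of_tendsto_of_tendsto (hg y) (hg y') hevle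
  constructor
  · intro x
    obtain ⟨c, hc⟩ := hPstab x
    refine ⟨fun _ => -c, fun k i => ?_⟩
    have key : ∀ k, (P ^ k).mulVec x ≤ g^[k] x := by
      intro k
      induction k with
      | zero => simp [Matrix.one_mulVec]
      | succ k ih =>
        rw [Function.iterate_succ_apply', pow_succ', ← Matrix.mulVec_mulVec]
        calc P.mulVec ((P ^ k).mulVec x) ≤ P.mulVec (g^[k] x) := hPmono _ _ ih
          _ ≤ g (g^[k] x) := hgP _
    have h1 : -c ≤ (P ^ k).mulVec x i := by
      have := hc k
      have h2 : |(P ^ k).mulVec x i| ≤ ‖(P ^ k).mulVec x‖ := by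
        simpa using norm_le_pi_norm ((P ^ k).mulVec x) i
      have := abs_le.mp (h2.trans this)
      linarith [this.1]
    exact h1.trans (key k i)
  · intro x hx
    obtain ⟨c, hc⟩ := hPstab (x - v)
    refine ⟨fun i => v i - c, fun k i => ?_⟩
    have key : ∀ k, f^[k] x ∈ D ∧ v + (P ^ k).mulVec (x - v) ≤ f^[k] x := by
      intro k
      induction k with
      | zero => exact ⟨hx, by simp [Matrix.one_mulVec]⟩
      | succ k ih =>
        obtain ⟨hmem, hle⟩ := ih
        refine ⟨by rw [Function.iterate_succ_apply']; exact hmaps hmem, ?_⟩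
        rw [Function.iterate_succ_apply', pow_succ', ← Matrix.mulVec_mulVec]
        have h1 := hP _ hmem
        have h2 : f^[k] x - v ≥ (P ^ k).mulVec (x - v) := by
          intro i; have := hle i; simp only [Pi.add_apply] at this
          simp only [Pi.sub_apply]; linarith
        calc v + P.mulVec ((P ^ k).mulVec (x - v))
            ≤ v + P.mulVec (f^[k] x - v) := by
              intro i
              simp only [Pi.add_apply]
              linarith [hPmono _ _ h2 i]
          _ ≤ f (f^[k] x) := by
              intro i
              have := h1 i
              simp only [Pi.sub_apply, hfix] at this
              simp only [Pi.add_apply]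
              linarith
    obtain ⟨_, hle⟩ := key k
    have h1 : -c ≤ (P ^ k).mulVec (x - v) i := by
      have h2 : |(P ^ k).mulVec (x - v) i| ≤ ‖(P ^ k).mulVec (x - v)‖ := by
        simpa using norm_le_pi_norm ((P ^ k).mulVec (x - v)) i
      have := abs_le.mp (h2.trans (hc k))
      linarith [this.1]
    have := hle i
    simp only [Pi.add_apply] at this
    show v i - c ≤ f^[k] x i
    linarith
end
end

section
/- If P is a nonnegative stable matrix and C, C' are two distinct critical classes of P, then no node of C has access to any node of C' in the directed graph of P. -/
noncomputable section
open Filter Topology Set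
open scoped Classical

/-! ### Auxiliary lemmas for the proof of `stmt7` -/

set_option linter.unusedSectionVars false
set_option linter.unusedVariables false
set_option maxHeartbeats 1000000

section AuxGen
variable {ι : Type*} [Fintype ι] [DecidableEq ι]

lemma entries_nonneg_mul {A B : Matrix ι ι ℝ} (hA : ∀ i j, 0 ≤ A i j)
    (hB : ∀ i j, 0 ≤ B i j) : ∀ i j, 0 ≤ (A * B) i j := by
  intro i j
  rw [Matrix.mul_apply]
  exact Finset.sum_nonneg fun k _ => mul_nonneg (hA i k) (hB k j)

lemma entries_nonneg_pow {A : Matrix ι ι ℝ} (hA : ∀ i j, 0 ≤ A i j) :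
    ∀ k i j, 0 ≤ (A ^ k) i j := by
  intro k
  induction k with
  | zero => intro i j; rw [pow_zero]; by_cases h : i = j <;>
      simp [Matrix.one_apply, h]
  | succ m ih => rw [pow_succ]; exact entries_nonneg_mul ih hA

lemma single_term_le_mul {A B : Matrix ι ι ℝ} (hA : ∀ i j, 0 ≤ A i j)
    (hB : ∀ i j, 0 ≤ B i j) (i j x : ι) : A i x * B x j ≤ (A * B) i j := by
  rw [Matrix.mul_apply]
  exact Finset.single_le_sum (f := fun k => A i k * B k j)
    (fun k _ => mul_nonneg (hA i k) (hB k j)) (Finset.mem_univ x)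

lemma sandwich_zero {A : Type*} [Ring A] {p q : A} (h : p * q = 0) (X Y : A) :
    (X * p) * (q * Y) = 0 := by
  rw [mul_assoc, ← mul_assoc p q Y, h, zero_mul, mul_zero]

lemma exists_pow_pos {Q : Matrix ι ι ℝ} (hQ : ∀ i j, 0 ≤ Q i j)
    {x y : ι} (h : Relation.ReflTransGen (fun i j => 0 < Q i j) x y) :
    ∃ p, 0 < (Q ^ p) x y := by
  induction h with
  | refl => exact ⟨0, by simp [Matrix.one_apply]⟩
  | tail hxz hzy ih =>
      obtain ⟨p, hp⟩ := ih
      exact ⟨p + 1, lt_of_lt_of_le (mul_pos hp hzy)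
        (by rw [pow_succ]; exact single_term_le_mul (entries_nonneg_pow hQ p) hQ _ _ _)⟩

end AuxGen

lemma pow_block_identity {A : Type*} [Ring A] {p b r d : A}
    (hp : p = b + r + d) (hbd : b * d = 0) (hdb : d * b = 0) (hdr : d * r = 0)
    (hrr : r * r = 0) (hrb : r * b = 0) :
    ∀ N : ℕ, p ^ (N + 1) = b ^ (N + 1) + d ^ (N + 1) +
      ∑ k ∈ Finset.range (N + 1), b ^ k * r * d ^ (N - k) := by
  have key1 : ∀ l : ℕ, (r * d ^ l) * b = 0 := by
    intro l
    cases l with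
    | zero => simpa using hrb
    | succ m =>
        rw [pow_succ, ← mul_assoc, mul_assoc _ d b, hdb, mul_zero]
  have key2 : ∀ l : ℕ, (r * d ^ l) * r = 0 := by
    intro l
    cases l with
    | zero => simpa using hrr
    | succ m =>
        rw [pow_succ, ← mul_assoc, mul_assoc _ d r, hdr, mul_zero]
  intro N
  induction N with
  | zero => simp [hp, add_comm, add_assoc, add_left_comm]
  | succ N ih =>
      have hPow : p ^ (N + 2) = p ^ (N + 1) * p := by rw [pow_succ]
      rw [hPow, ih, hp]
      have hbpow : ∀ m : ℕ, b ^ m * b = b ^ (m+1) := fun m => (pow_succ b m).symm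
      have hdpow : ∀ m : ℕ, d ^ m * d = d ^ (m+1) := fun m => (pow_succ d m).symm
      have hbd' : b ^ (N+1) * d = 0 := by
        rw [pow_succ, mul_assoc, hbd, mul_zero]
      have hdb' : d ^ (N+1) * b = 0 := by
        rw [pow_succ, mul_assoc, hdb, mul_zero]
      have hdr' : d ^ (N+1) * r = 0 := by
        rw [pow_succ, mul_assoc, hdr, mul_zero]
      have hSb : (∑ k ∈ Finset.range (N + 1), b ^ k * r * d ^ (N - k)) * b = 0 := by
        rw [Finset.sum_mul]
        refine Finset.sum_eq_zero fun k _ => ?_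
        rw [mul_assoc (b^k) r _, mul_assoc, key1, mul_zero]
      have hSr : (∑ k ∈ Finset.range (N + 1), b ^ k * r * d ^ (N - k)) * r = 0 := by
        rw [Finset.sum_mul]
        refine Finset.sum_eq_zero fun k _ => ?_
        rw [mul_assoc (b^k) r _, mul_assoc, key2, mul_zero]
      have hSd : (∑ k ∈ Finset.range (N + 1), b ^ k * r * d ^ (N - k)) * d
          = ∑ k ∈ Finset.range (N + 1), b ^ k * r * d ^ (N + 1 - k) := by
        rw [Finset.sum_mul]
        refine Finset.sum_congr rfl fun k hk => ?_
        have hk' : k ≤ N := Nat.lt_succ_iff.mp (Finset.mem_range.mp hk)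
        rw [mul_assoc, hdpow]
        congr 2
        omega
      rw [mul_add, mul_add, add_mul, add_mul, add_mul, add_mul, add_mul, add_mul]
      rw [hbpow, hdpow, hbd', hdb', hdr', hSb, hSr, hSd]
      rw [Finset.sum_range_succ _ (N+1)]
      have : b ^ (N + 1) * r * d ^ (N + 1 - (N + 1)) = b ^ (N+1) * r := by simp
      rw [this]
      abel

section AuxFin
variable {n : ℕ}

lemma sum_subtype_le_sum {S : Set (Fin n)} [Fintype S] {f : Fin n → ℝ}
    (hf : ∀ c, 0 ≤ f c) : ∑ c : S, f c.1 ≤ ∑ c, f c := by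
  rw [Finset.sum_set_coe (f := f) (s := S)]
  exact Finset.sum_le_sum_of_subset_of_nonneg (Finset.subset_univ _)
    (fun i _ _ => hf i)

lemma submatrix_pow_le {S : Set (Fin n)} [Fintype S] {Q : Matrix (Fin n) (Fin n) ℝ}
    (hQ : ∀ i j, 0 ≤ Q i j) (k : ℕ) (a b : S) :
    ((Matrix.of fun i j : S => Q i.1 j.1) ^ k) a b ≤ (Q ^ k) a.1 b.1 := by
  have hQs : ∀ i j : S, 0 ≤ (Matrix.of fun i j : S => Q i.1 j.1) i j :=
    fun i j => hQ i.1 j.1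
  induction k generalizing b with
  | zero =>
      rw [pow_zero, pow_zero]
      by_cases h : a = b
      · subst h; simp [Matrix.one_apply]
      · rw [Matrix.one_apply_ne h, Matrix.one_apply_ne (fun hh => h (Subtype.ext hh))]
  | succ m ih =>
      rw [pow_succ, pow_succ, Matrix.mul_apply, Matrix.mul_apply]
      calc ∑ c : S, ((Matrix.of fun i j : S => Q i.1 j.1) ^ m) a c
            * (Matrix.of fun i j : S => Q i.1 j.1) c b
          ≤ ∑ c : S, (Q ^ m) a.1 c.1 * Q c.1 b.1 := by
            refine Finset.sum_le_sum fun c _ => ?_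
            exact mul_le_mul (ih c) le_rfl (hQs c b) (entries_nonneg_pow hQ m a.1 c.1)
        _ ≤ ∑ c, (Q ^ m) a.1 c * Q c b.1 :=
            sum_subtype_le_sum fun c => mul_nonneg (entries_nonneg_pow hQ m a.1 c) (hQ c b.1)

lemma mem_of_access_mem {P : Matrix (Fin n) (Fin n) ℝ} {U : Set (Fin n)}
    (hU : ∀ x y, 0 < P x y → y ∈ U → x ∈ U) :
    ∀ {a b}, AccessM P a b → b ∈ U → a ∈ U := by
  intro a b h
  induction h using Relation.ReflTransGen.head_induction_on with
  | refl => exact fun hb => hb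
  | head step rest ih => exact fun hb => hU _ _ step (ih hb)

lemma access_rtg_of_back_closed {P : Matrix (Fin n) (Fin n) ℝ} {U : Set (Fin n)}
    {B' : Matrix (Fin n) (Fin n) ℝ}
    (hU : ∀ x y, 0 < P x y → y ∈ U → x ∈ U)
    (hB : ∀ x y, x ∈ U → y ∈ U → 0 < P x y → 0 < B' x y) :
    ∀ {x y}, AccessM P x y → y ∈ U →
      Relation.ReflTransGen (fun a b => 0 < B' a b) x y := by
  intro x y h
  induction h using Relation.ReflTransGen.head_induction_on with
  | refl => exact fun _ => Relation.ReflTransGen.refl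
  | @head a c step rest ih =>
      intro hy
      have hc : c ∈ U := mem_of_access_mem hU rest hy
      have ha : a ∈ U := hU _ _ step hc
      exact Relation.ReflTransGen.head (hB _ _ ha hc step) (ih hy)

lemma access_rtg_of_fwd_closed {P : Matrix (Fin n) (Fin n) ℝ} {V : Set (Fin n)}
    {D' : Matrix (Fin n) (Fin n) ℝ}
    (hV : ∀ x y, x ∈ V → 0 < P x y → y ∈ V)
    (hD : ∀ x y, x ∈ V → y ∈ V → 0 < P x y → 0 < D' x y) :
    ∀ {x y}, AccessM P x y → x ∈ V →
      Relation.ReflTransGen (fun a b => 0 < D' a b) x y := by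
  intro x y h
  induction h using Relation.ReflTransGen.head_induction_on with
  | refl => exact fun _ => Relation.ReflTransGen.refl
  | @head a c step rest ih =>
      intro hx
      have hc : c ∈ V := hV _ _ hx step
      exact Relation.ReflTransGen.head (hD _ _ hx hc step) (ih hc)

lemma crossing_exists {P : Matrix (Fin n) (Fin n) ℝ} {W : Set (Fin n)} :
    ∀ {i j}, AccessM P i j → i ∉ W → j ∈ W →
    ∃ u w, u ∉ W ∧ w ∈ W ∧ 0 < P u w ∧ AccessM P i u ∧ AccessM P w j := by
  intro i j h
  induction h using Relation.ReflTransGen.head_induction_on with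
  | refl => exact fun hi hj => absurd hj hi
  | @head a c step rest ih =>
      intro hi hj
      by_cases hc : c ∈ W
      · exact ⟨a, c, hi, hc, step, Relation.ReflTransGen.refl, rest⟩
      · obtain ⟨u, w, h1, h2, h3, h4, h5⟩ := ih hc hj
        exact ⟨u, w, h1, h2, h3, Relation.ReflTransGen.head step h4, h5⟩

end AuxFin

lemma avg_lower_bound {c : ℕ → ℝ} (hc : ∀ t, 0 ≤ c t) {ε : ℝ} (hε : 0 ≤ ε) {p : ℕ}
    (h : ∀ k, ∃ t, k ≤ t ∧ t ≤ k + p ∧ ε ≤ c t) (M : ℕ) :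
    (M + 1 : ℝ) * ε ≤ (p + 1 : ℝ) * ∑ t ∈ Finset.range (M + p + 1), c t := by
  choose ψ hψ1 hψ2 hψ3 using h
  set s : Finset ℕ := Finset.range (M + 1) with hs
  have himg : s.image ψ ⊆ Finset.range (M + p + 1) := by
    intro t ht
    obtain ⟨k, hk, rfl⟩ := Finset.mem_image.mp ht
    have hk' : k ≤ M := Nat.lt_succ_iff.mp (Finset.mem_range.mp hk)
    exact Finset.mem_range.mpr (by have := hψ2 k; omega)
  have hcard : s.card ≤ (p + 1) * (s.image ψ).card := by
    refine Finset.card_le_mul_card_image s (p + 1) fun b _ => ?_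
    have hsub : {a ∈ s | ψ a = b} ⊆ Finset.Icc (b - p) b := by
      intro k hk
      obtain ⟨-, hk2⟩ := Finset.mem_filter.mp hk
      have h1 := hψ1 k
      have h2 := hψ2 k
      rw [hk2] at h1 h2
      exact Finset.mem_Icc.mpr (by omega)
    calc ({a ∈ s | ψ a = b}).card ≤ (Finset.Icc (b - p) b).card := Finset.card_le_card hsub
      _ = b + 1 - (b - p) := Nat.card_Icc _ _
      _ ≤ p + 1 := by omega
  have hsum1 : (s.image ψ).card • ε ≤ ∑ t ∈ s.image ψ, c t := by
    refine Finset.card_nsmul_le_sum _ _ _ fun x hx => ?_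
    obtain ⟨k, -, rfl⟩ := Finset.mem_image.mp hx
    exact hψ3 k
  have hsum2 : ∑ t ∈ s.image ψ, c t ≤ ∑ t ∈ Finset.range (M + p + 1), c t :=
    Finset.sum_le_sum_of_subset_of_nonneg himg fun t _ _ => hc t
  have hcardR : (M + 1 : ℝ) ≤ (p + 1 : ℝ) * (s.image ψ).card := by
    have : (s.card : ℝ) ≤ ((p + 1) * (s.image ψ).card : ℕ) := Nat.cast_le.mpr hcard
    simpa [hs] using this
  calc (M + 1 : ℝ) * ε ≤ ((p + 1 : ℝ) * (s.image ψ).card) * ε :=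
        mul_le_mul_of_nonneg_right hcardR hε
    _ = (p + 1 : ℝ) * ((s.image ψ).card • ε) := by rw [nsmul_eq_mul]; ring
    _ ≤ (p + 1 : ℝ) * ∑ t ∈ Finset.range (M + p + 1), c t := by
        refine mul_le_mul_of_nonneg_left (hsum1.trans hsum2) (by positivity)

lemma one_le_sum_pow {ι : Type*} [Fintype ι] [DecidableEq ι] [Nonempty ι]
    {Q : Matrix ι ι ℝ} (hQ : ∀ i j, 0 ≤ Q i j) (hspec : SpecRad Q = 1) :
    ∀ k, 1 ≤ ∑ i, ∑ j, (Q ^ k) i j := by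
  set Qc : Matrix ι ι ℂ := Q.map (fun a => (a : ℂ)) with hQc
  set s : Set ℝ := {r : ℝ | ∃ μ : ℂ, μ ∈ spectrum ℂ Qc ∧ r = ‖μ‖} with hsdef
  have hs_eq : s = (fun μ : ℂ => ‖μ‖) '' spectrum ℂ Qc := by
    ext r; constructor
    · rintro ⟨μ, hμ, rfl⟩; exact ⟨μ, hμ, rfl⟩
    · rintro ⟨μ, hμ, rfl⟩; exact ⟨μ, hμ, rfl⟩
  have hfin : s.Finite := by
    rw [hs_eq]; exact (Matrix.finite_spectrum Qc).image _
  have hsup : sSup s = 1 := by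
    have := hspec
    unfold SpecRad at this
    rw [Subsingleton.elim (Classical.decEq ι) ‹DecidableEq ι›] at this
    rw [hsdef, hQc]
    exact this
  have hne : s.Nonempty := by
    by_contra hcon
    rw [Set.not_nonempty_iff_eq_empty] at hcon
    rw [hcon, Real.sSup_empty] at hsup
    norm_num at hsup
  have hmem : sSup s ∈ s := hne.csSup_mem hfin
  rw [hsup] at hmem
  obtain ⟨μ, hμspec, hμabs⟩ := hmem
  have hnotunit : ¬ IsUnit (algebraMap ℂ (Matrix ι ι ℂ) μ - Qc) :=
    spectrum.mem_iff.mp hμspec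
  have hdet : (algebraMap ℂ (Matrix ι ι ℂ) μ - Qc).det = 0 := by
    by_contra hd
    exact hnotunit ((Matrix.isUnit_iff_isUnit_det _).mpr (isUnit_iff_ne_zero.mpr hd))
  obtain ⟨v, hv0, hveq⟩ := (Matrix.exists_mulVec_eq_zero_iff).mpr hdet
  have heig : Qc.mulVec v = μ • v := by
    have h1 : (algebraMap ℂ (Matrix ι ι ℂ) μ - Qc).mulVec v
        = (algebraMap ℂ (Matrix ι ι ℂ) μ).mulVec v - Qc.mulVec v :=
      Matrix.sub_mulVec _ _ _
    have h2 : (algebraMap ℂ (Matrix ι ι ℂ) μ).mulVec v = μ • v := by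
      rw [Matrix.algebraMap_eq_diagonal]
      ext i
      simp [Matrix.mulVec_diagonal, Pi.algebraMap_apply, Algebra.algebraMap_self_apply]
    rw [h1, h2] at hveq
    exact (sub_eq_zero.mp hveq).symm
  have hpow : ∀ k, (Qc ^ k).mulVec v = μ ^ k • v := by
    intro k
    induction k with
    | zero => simp
    | succ m ih =>
        calc (Qc ^ (m + 1)).mulVec v = (Qc * Qc ^ m).mulVec v := by rw [pow_succ']
          _ = Qc.mulVec ((Qc ^ m).mulVec v) := (Matrix.mulVec_mulVec v Qc (Qc ^ m)).symm
          _ = Qc.mulVec (μ ^ m • v) := by rw [ih]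
          _ = μ ^ m • Qc.mulVec v := Matrix.mulVec_smul Qc (μ ^ m) v
          _ = μ ^ m • (μ • v) := by rw [heig]
          _ = μ ^ (m + 1) • v := by rw [smul_smul, pow_succ]
  obtain ⟨i, -, hmax⟩ := Finset.exists_max_image Finset.univ (fun j => ‖v j‖)
    ⟨Classical.arbitrary ι, Finset.mem_univ _⟩
  have hvi : 0 < ‖v i‖ := by
    have : ∃ j, v j ≠ 0 := Function.ne_iff.mp hv0
    obtain ⟨j, hj⟩ := this
    exact lt_of_lt_of_le (norm_pos_iff.mpr hj) (hmax j (Finset.mem_univ j))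
  intro k
  have hentry : ∀ j, ‖(Qc ^ k) i j‖ = (Q ^ k) i j := by
    intro j
    have : Qc ^ k = (Q ^ k).map (fun a => (a : ℂ)) := by
      have : Qc = (RingHom.mapMatrix (Complex.ofRealHom) : Matrix ι ι ℝ →+* Matrix ι ι ℂ) Q := rfl
      rw [this, ← map_pow]
      rfl
    rw [this]
    simp only [Matrix.map_apply]
    rw [Complex.norm_real, Real.norm_of_nonneg (entries_nonneg_pow hQ k i j)]
  have hcomp : (μ ^ k) * v i = ∑ j, (Qc ^ k) i j * v j := by
    have := congrFun (hpow k) i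
    rw [Matrix.mulVec, dotProduct] at this
    simpa [Pi.smul_apply, smul_eq_mul] using this.symm
  have hbound : ‖μ ^ k‖ * ‖v i‖
      ≤ (∑ j, (Q ^ k) i j) * ‖v i‖ := by
    rw [← norm_mul, hcomp]
    calc ‖∑ j, (Qc ^ k) i j * v j‖
        ≤ ∑ j, ‖(Qc ^ k) i j * v j‖ :=
          norm_sum_le Finset.univ (fun j => (Qc ^ k) i j * v j)
      _ = ∑ j, (Q ^ k) i j * ‖v j‖ := by
          refine Finset.sum_congr rfl fun j _ => ?_
          rw [norm_mul, hentry]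
      _ ≤ ∑ j, (Q ^ k) i j * ‖v i‖ := by
          refine Finset.sum_le_sum fun j _ => ?_
          exact mul_le_mul_of_nonneg_left (hmax j (Finset.mem_univ j))
            (entries_nonneg_pow hQ k i j)
      _ = (∑ j, (Q ^ k) i j) * ‖v i‖ := by rw [Finset.sum_mul]
  have h1k : ‖μ ^ k‖ = 1 := by rw [norm_pow, ← hμabs, one_pow]
  rw [h1k, one_mul] at hbound
  have hrow : 1 ≤ ∑ j, (Q ^ k) i j := le_of_mul_le_mul_right (by rw [one_mul]; exact hbound) hvi
  calc (1 : ℝ) ≤ ∑ j, (Q ^ k) i j := hrow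
    _ ≤ ∑ i', ∑ j, (Q ^ k) i' j := by
        refine Finset.single_le_sum (f := fun i' => ∑ j, (Q ^ k) i' j) ?_ (Finset.mem_univ i)
        exact fun i' _ => Finset.sum_nonneg fun j _ => entries_nonneg_pow hQ k i' j

/-- distinct critical classes of a nonnegative stable matrix have no
access to one another. -/
theorem stmt7 {n : ℕ} (P : Matrix (Fin n) (Fin n) ℝ)
    (hpos : ∀ i j, 0 ≤ P i j) (hstab : MatStable P)
    (C C' : Set (Fin n)) (hC : IsCriticalClass P C) (hC' : IsCriticalClass P C')
    (hne : C ≠ C') :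
    ∀ i ∈ C, ∀ j ∈ C', ¬ AccessM P i j := by
  intro i hi j hj hacc
  obtain ⟨⟨i₀, hCdef⟩, hCrad⟩ := hC
  obtain ⟨⟨i₁, hC'def⟩, hC'rad⟩ := hC'
  haveI fC : Fintype C := Fintype.ofFinite _
  haveI fC' : Fintype C' := Fintype.ofFinite _
  haveI : Nonempty C := ⟨⟨i, hi⟩⟩
  haveI : Nonempty C' := ⟨⟨j, hj⟩⟩
  have htrans : ∀ {a b c : Fin n}, AccessM P a b → AccessM P b c → AccessM P a c :=
    fun hab hbc => Relation.ReflTransGen.trans hab hbc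
  have hmemC : ∀ x, x ∈ C ↔ AccessM P i₀ x ∧ AccessM P x i₀ := by
    intro x; rw [hCdef]; exact Iff.rfl
  have hmemC' : ∀ x, x ∈ C' ↔ AccessM P i₁ x ∧ AccessM P x i₁ := by
    intro x; rw [hC'def]; exact Iff.rfl
  -- the set of nodes with no access to C
  set W : Set (Fin n) := {x | ¬ ∃ c ∈ C, AccessM P x c} with hWdef
  have hWclosed : ∀ x y, x ∈ W → 0 < P x y → y ∈ W := by
    intro x y hx hxy hyW
    obtain ⟨c, hc, hyc⟩ := hyW
    exact hx ⟨c, hc, Relation.ReflTransGen.head hxy hyc⟩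
  have hCnW : ∀ c ∈ C, c ∉ W := fun c hc h => h ⟨c, hc, Relation.ReflTransGen.refl⟩
  have hWback : ∀ x y, 0 < P x y → y ∉ W → x ∉ W := by
    intro x y hxy hy hx
    exact hy (hWclosed x y hx hxy)
  have hC'W : ∀ x ∈ C', x ∈ W := by
    intro x hx hxW
    obtain ⟨c, hc, hxc⟩ := hxW
    -- derive C = C', contradicting hne
    obtain ⟨hc1, hc2⟩ := (hmemC c).mp hc
    obtain ⟨hi1, hi2⟩ := (hmemC i).mp hi
    obtain ⟨hj1, hj2⟩ := (hmemC' j).mp hj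
    obtain ⟨hx1, hx2⟩ := (hmemC' x).mp hx
    -- i₀ ↔ i₁
    have h01 : AccessM P i₀ i₁ := htrans hi1 (htrans hacc hj2)
    have h10 : AccessM P i₁ i₀ := htrans hx1 (htrans hxc hc2)
    apply hne
    ext z
    rw [hmemC z, hmemC' z]
    constructor
    · rintro ⟨hz1, hz2⟩; exact ⟨htrans h10 hz1, htrans hz2 h01⟩
    · rintro ⟨hz1, hz2⟩; exact ⟨htrans h01 hz1, htrans hz2 h10⟩
  -- projections and blocks
  set dπ : Fin n → ℝ := fun x => if x ∈ W then 0 else 1 with hdπ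
  set dπ' : Fin n → ℝ := fun x => if x ∈ W then 1 else 0 with hdπ'
  set π : Matrix (Fin n) (Fin n) ℝ := Matrix.diagonal dπ with hπ
  set π' : Matrix (Fin n) (Fin n) ℝ := Matrix.diagonal dπ' with hπ'
  set B : Matrix (Fin n) (Fin n) ℝ := π * P * π with hB
  set R : Matrix (Fin n) (Fin n) ℝ := π * P * π' with hR
  set D : Matrix (Fin n) (Fin n) ℝ := π' * P * π' with hD
  have hBe : ∀ x y, B x y = dπ x * P x y * dπ y := by
    intro x y
    rw [hB, hπ, Matrix.mul_diagonal, Matrix.diagonal_mul]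
  have hRe : ∀ x y, R x y = dπ x * P x y * dπ' y := by
    intro x y
    rw [hR, hπ, hπ', Matrix.mul_diagonal, Matrix.diagonal_mul]
  have hDe : ∀ x y, D x y = dπ' x * P x y * dπ' y := by
    intro x y
    rw [hD, hπ', Matrix.mul_diagonal, Matrix.diagonal_mul]
  have hdπ0 : ∀ x, 0 ≤ dπ x := by
    intro x; rw [hdπ]; dsimp only; split <;> norm_num
  have hdπ'0 : ∀ x, 0 ≤ dπ' x := by
    intro x; rw [hdπ']; dsimp only; split <;> norm_num
  have hBnn : ∀ x y, 0 ≤ B x y := fun x y => by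
    rw [hBe]; exact mul_nonneg (mul_nonneg (hdπ0 x) (hpos x y)) (hdπ0 y)
  have hRnn : ∀ x y, 0 ≤ R x y := fun x y => by
    rw [hRe]; exact mul_nonneg (mul_nonneg (hdπ0 x) (hpos x y)) (hdπ'0 y)
  have hDnn : ∀ x y, 0 ≤ D x y := fun x y => by
    rw [hDe]; exact mul_nonneg (mul_nonneg (hdπ'0 x) (hpos x y)) (hdπ'0 y)
  have hBP : ∀ x y, x ∉ W → y ∉ W → B x y = P x y := by
    intro x y hx hy
    rw [hBe, hdπ]; simp [hx, hy]
  have hRP : ∀ x y, x ∉ W → y ∈ W → R x y = P x y := by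
    intro x y hx hy
    rw [hRe, hdπ, hdπ']; simp [hx, hy]
  have hDP : ∀ x y, x ∈ W → y ∈ W → D x y = P x y := by
    intro x y hx hy
    rw [hDe, hdπ']; simp [hx, hy]
  have hππ' : π * π' = 0 := by
    rw [hπ, hπ', Matrix.diagonal_mul_diagonal]
    have hz : (fun i => dπ i * dπ' i) = fun _ => (0 : ℝ) := by
      funext x
      rw [hdπ, hdπ']; dsimp only; split <;> norm_num
    rw [hz, Matrix.diagonal_zero]
  have hπ'π : π' * π = 0 := by
    rw [hπ, hπ', Matrix.diagonal_mul_diagonal]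
    have hz : (fun i => dπ' i * dπ i) = fun _ => (0 : ℝ) := by
      funext x
      rw [hdπ, hdπ']; dsimp only; split <;> norm_num
    rw [hz, Matrix.diagonal_zero]
  have hBD : B * D = 0 := by
    rw [hB, hD, mul_assoc π' P π']
    exact sandwich_zero hππ' _ _
  have hDB : D * B = 0 := by
    rw [hB, hD, mul_assoc π P π]
    exact sandwich_zero hπ'π _ _
  have hDR : D * R = 0 := by
    rw [hD, hR, mul_assoc π P π']
    exact sandwich_zero hπ'π _ _
  have hRR : R * R = 0 := by
    rw [hR]
    nth_rewrite 2 [mul_assoc π P π']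
    exact sandwich_zero hπ'π _ _
  have hRB : R * B = 0 := by
    rw [hR, hB, mul_assoc π P π]
    exact sandwich_zero hπ'π _ _
  have hPW0 : ∀ x y, x ∈ W → y ∉ W → P x y = 0 := by
    intro x y hx hy
    by_contra h
    exact hy (hWclosed x y hx (lt_of_le_of_ne (hpos x y) (Ne.symm h)))
  have hPdecomp : P = B + R + D := by
    ext x y
    rw [Matrix.add_apply, Matrix.add_apply, hBe, hRe, hDe, hdπ, hdπ']
    by_cases hx : x ∈ W <;> by_cases hy : y ∈ W <;> simp [hx, hy]
    exact hPW0 x y hx hy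
  -- crossing edge
  obtain ⟨u, w, huW, hwW, huw, hiu, hwj⟩ :=
    crossing_exists (P := P) (W := W) hacc (hCnW i hi) (hC'W j hj)
  set ρ₀ : ℝ := P u w with hρ₀
  have hρ₀pos : 0 < ρ₀ := huw
  -- reachability inside the blocks
  have hBreach : ∀ {x y : Fin n}, AccessM P x y → y ∉ W → ∃ p, 0 < (B ^ p) x y := by
    intro x y hxy hy
    refine exists_pow_pos hBnn ?_
    refine access_rtg_of_back_closed (P := P) (U := {z | z ∉ W}) ?_ ?_ hxy hy
    · exact fun a b hab hb ha => hWback a b hab hb ha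
    · intro a b ha hb hab
      rw [hBP a b ha hb]; exact hab
  have hDreach : ∀ {x y : Fin n}, AccessM P x y → x ∈ W → ∃ p, 0 < (D ^ p) x y := by
    intro x y hxy hx
    refine exists_pow_pos hDnn ?_
    refine access_rtg_of_fwd_closed (P := P) (V := W) hWclosed ?_ hxy hx
    · intro a b ha hb hab
      rw [hDP a b ha hb]; exact hab
  -- spectral lower bounds for the two diagonal blocks
  have hSC : ∀ k, (1 : ℝ) ≤ ∑ a : C, ∑ b : C, (B ^ k) a.1 b.1 := by
    have hQrad : SpecRad (Matrix.of fun a b : C => P a.1 b.1) = 1 := by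
      have := hCrad
      unfold SpecRadOn at this
      convert this using 2
    have hone := one_le_sum_pow (Q := Matrix.of fun a b : C => P a.1 b.1)
      (fun a b => hpos a.1 b.1) hQrad
    intro k
    refine (hone k).trans ?_
    have hQB : (Matrix.of fun a b : C => P a.1 b.1)
        = Matrix.of fun a b : C => B a.1 b.1 := by
      ext a b
      exact (hBP a.1 b.1 (hCnW a.1 a.2) (hCnW b.1 b.2)).symm
    refine Finset.sum_le_sum fun a _ => Finset.sum_le_sum fun b _ => ?_
    rw [hQB]
    exact submatrix_pow_le hBnn k a b
  have hSC' : ∀ k, (1 : ℝ) ≤ ∑ a : C', ∑ b : C', (D ^ k) a.1 b.1 := by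
    have hQrad : SpecRad (Matrix.of fun a b : C' => P a.1 b.1) = 1 := by
      have := hC'rad
      unfold SpecRadOn at this
      convert this using 2
    have hone := one_le_sum_pow (Q := Matrix.of fun a b : C' => P a.1 b.1)
      (fun a b => hpos a.1 b.1) hQrad
    intro k
    refine (hone k).trans ?_
    have hQD : (Matrix.of fun a b : C' => P a.1 b.1)
        = Matrix.of fun a b : C' => D a.1 b.1 := by
      ext a b
      exact (hDP a.1 b.1 (hC'W a.1 a.2) (hC'W b.1 b.2)).symm
    refine Finset.sum_le_sum fun a _ => Finset.sum_le_sum fun b _ => ?_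
    rw [hQD]
    exact submatrix_pow_le hDnn k a b
  -- the two scalar sequences
  set cseq : ℕ → ℝ := fun k => ∑ a : C, (B ^ k) a.1 u with hcseq
  set dseq : ℕ → ℝ := fun l => ∑ b : C', (D ^ l) w b.1 with hdseq
  have hcnn : ∀ k, 0 ≤ cseq k := fun k =>
    Finset.sum_nonneg fun a _ => entries_nonneg_pow hBnn k a.1 u
  have hdnn : ∀ l, 0 ≤ dseq l := fun l =>
    Finset.sum_nonneg fun b _ => entries_nonneg_pow hDnn l w b.1
  -- average column/row bounds
  set cardC : ℝ := (Fintype.card C : ℝ) with hcardC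
  set cardC' : ℝ := (Fintype.card C' : ℝ) with hcardC'
  have hcardCpos : 0 < cardC := by
    rw [hcardC]; exact_mod_cast Fintype.card_pos
  have hcardC'pos : 0 < cardC' := by
    rw [hcardC']; exact_mod_cast Fintype.card_pos
  have hcol : ∀ k, ∃ a' : C, cardC⁻¹ ≤ ∑ a : C, (B ^ k) a.1 a'.1 := by
    intro k
    have h1 : ∑ b : C, cardC⁻¹ ≤ ∑ b : C, ∑ a : C, (B ^ k) a.1 b.1 := by
      rw [Finset.sum_const, Finset.card_univ, nsmul_eq_mul]
      rw [mul_inv_cancel₀ (ne_of_gt hcardCpos)]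
      rw [Finset.sum_comm]
      exact hSC k
    obtain ⟨b, -, hb⟩ := Finset.exists_le_of_sum_le Finset.univ_nonempty h1
    exact ⟨b, hb⟩
  have hrow : ∀ l, ∃ b' : C', cardC'⁻¹ ≤ ∑ b : C', (D ^ l) b'.1 b.1 := by
    intro l
    have h1 : ∑ a : C', cardC'⁻¹ ≤ ∑ a : C', ∑ b : C', (D ^ l) a.1 b.1 := by
      rw [Finset.sum_const, Finset.card_univ, nsmul_eq_mul]
      rw [mul_inv_cancel₀ (ne_of_gt hcardC'pos)]
      exact hSC' l
    obtain ⟨a, -, ha⟩ := Finset.exists_le_of_sum_le Finset.univ_nonempty h1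
    exact ⟨a, ha⟩
  -- connectors
  have hconnC : ∀ a' : C, ∃ p, 0 < (B ^ p) a'.1 u := by
    intro a'
    have h1 : AccessM P a'.1 u := by
      obtain ⟨-, h2⟩ := (hmemC a'.1).mp a'.2
      obtain ⟨h3, -⟩ := (hmemC i).mp hi
      exact htrans h2 (htrans h3 hiu)
    exact hBreach h1 huW
  have hconnC' : ∀ b' : C', ∃ q, 0 < (D ^ q) w b'.1 := by
    intro b'
    have h1 : AccessM P w b'.1 := by
      obtain ⟨-, h2⟩ := (hmemC' j).mp hj
      obtain ⟨h3, -⟩ := (hmemC' b'.1).mp b'.2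
      exact htrans hwj (htrans h2 h3)
    exact hDreach h1 hwW
  choose pf hpf using hconnC
  choose qf hqf using hconnC'
  set δc : ℝ := Finset.univ.inf' Finset.univ_nonempty (fun a' : C => (B ^ pf a') a'.1 u)
    with hδc
  set δd : ℝ := Finset.univ.inf' Finset.univ_nonempty (fun b' : C' => (D ^ qf b') w b'.1)
    with hδd
  have hδcpos : 0 < δc := by
    rw [hδc, Finset.lt_inf'_iff]
    exact fun a' _ => hpf a'
  have hδdpos : 0 < δd := by
    rw [hδd, Finset.lt_inf'_iff]
    exact fun b' _ => hqf b'
  set pc : ℕ := Finset.univ.sup pf with hpc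
  set pd : ℕ := Finset.univ.sup qf with hpd
  set εc : ℝ := cardC⁻¹ * δc with hεc
  set εd : ℝ := cardC'⁻¹ * δd with hεd
  have hεcpos : 0 < εc := mul_pos (inv_pos.mpr hcardCpos) hδcpos
  have hεdpos : 0 < εd := mul_pos (inv_pos.mpr hcardC'pos) hδdpos
  have hckey : ∀ k, ∃ t, k ≤ t ∧ t ≤ k + pc ∧ εc ≤ cseq t := by
    intro k
    obtain ⟨a', ha'⟩ := hcol k
    refine ⟨k + pf a', Nat.le_add_right _ _, by
      have := Finset.le_sup (f := pf) (Finset.mem_univ a'); omega, ?_⟩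
    have hstep : ∀ a : C, (B ^ k) a.1 a'.1 * (B ^ pf a') a'.1 u ≤ (B ^ (k + pf a')) a.1 u := by
      intro a
      rw [pow_add]
      exact single_term_le_mul (entries_nonneg_pow hBnn k) (entries_nonneg_pow hBnn _) _ _ _
    calc εc = cardC⁻¹ * δc := hεc
      _ ≤ (∑ a : C, (B ^ k) a.1 a'.1) * ((B ^ pf a') a'.1 u) := by
          refine mul_le_mul ha' ?_ (le_of_lt hδcpos) ?_
          · rw [hδc]; exact Finset.inf'_le _ (Finset.mem_univ a')
          · exact Finset.sum_nonneg fun a _ => entries_nonneg_pow hBnn k a.1 a'.1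
      _ = ∑ a : C, (B ^ k) a.1 a'.1 * (B ^ pf a') a'.1 u := by rw [Finset.sum_mul]
      _ ≤ ∑ a : C, (B ^ (k + pf a')) a.1 u := Finset.sum_le_sum fun a _ => hstep a
      _ = cseq (k + pf a') := by rw [hcseq]
  have hdkey : ∀ l, ∃ t, l ≤ t ∧ t ≤ l + pd ∧ εd ≤ dseq t := by
    intro l
    obtain ⟨b', hb'⟩ := hrow l
    refine ⟨qf b' + l, Nat.le_add_left _ _, by
      have := Finset.le_sup (f := qf) (Finset.mem_univ b'); omega, ?_⟩
    have hstep : ∀ b : C', (D ^ qf b') w b'.1 * (D ^ l) b'.1 b.1 ≤ (D ^ (qf b' + l)) w b.1 := by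
      intro b
      rw [pow_add]
      exact single_term_le_mul (entries_nonneg_pow hDnn _) (entries_nonneg_pow hDnn l) _ _ _
    calc εd = cardC'⁻¹ * δd := hεd
      _ ≤ (∑ b : C', (D ^ l) b'.1 b.1) * ((D ^ qf b') w b'.1) := by
          refine mul_le_mul hb' ?_ (le_of_lt hδdpos) ?_
          · rw [hδd]; exact Finset.inf'_le _ (Finset.mem_univ b')
          · exact Finset.sum_nonneg fun b _ => entries_nonneg_pow hDnn l b'.1 b.1
      _ = ∑ b : C', (D ^ qf b') w b'.1 * (D ^ l) b'.1 b.1 := by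
          rw [Finset.sum_mul]
          exact Finset.sum_congr rfl fun b _ => mul_comm _ _
      _ ≤ ∑ b : C', (D ^ (qf b' + l)) w b.1 := Finset.sum_le_sum fun b _ => hstep b
      _ = dseq (qf b' + l) := by rw [hdseq]
  -- uniform bound on entries of powers, from stability
  obtain ⟨K, hK0, hPK⟩ : ∃ K : ℝ, 0 ≤ K ∧ ∀ (N : ℕ) x y, (P ^ N) x y ≤ K := by
    choose cf hcf using fun x => hstab (Pi.single x 1)
    refine ⟨∑ x, cf x, ?_, ?_⟩
    · exact Finset.sum_nonneg fun x _ => le_trans (norm_nonneg _) (hcf x 0)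
    · intro N x y
      have h1 : ((P ^ N).mulVec (Pi.single y 1)) x = (P ^ N) x y := by
        rw [Matrix.mulVec_single]
        exact mul_one _
      calc (P ^ N) x y ≤ |(P ^ N) x y| := le_abs_self _
        _ = ‖((P ^ N).mulVec (Pi.single y 1)) x‖ := by rw [h1, Real.norm_eq_abs]
        _ ≤ ‖(P ^ N).mulVec (Pi.single y 1)‖ := norm_le_pi_norm _ x
        _ ≤ cf y := hcf y N
        _ ≤ ∑ x, cf x := Finset.single_le_sum
            (fun z _ => le_trans (norm_nonneg _) (hcf z 0)) (Finset.mem_univ y)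
  set KK : ℝ := cardC * (cardC' * K) with hKK
  have hKK0 : 0 ≤ KK := by
    rw [hKK]
    exact mul_nonneg hcardCpos.le (mul_nonneg hcardC'pos.le hK0)
  -- convolution lower bound
  have hF : ∀ N : ℕ, ∑ k ∈ Finset.range (N + 1), cseq k * (ρ₀ * dseq (N - k))
      ≤ ∑ a : C, ∑ b : C', (P ^ (N + 1)) a.1 b.1 := by
    intro N
    have hρR : R u w = ρ₀ := by rw [hρ₀]; exact hRP u w huW hwW
    have hterm : ∀ (a : C) (b : C'), ∀ k ∈ Finset.range (N + 1),
        (B ^ k) a.1 u * (ρ₀ * (D ^ (N - k)) w b.1)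
          ≤ (B ^ k * R * D ^ (N - k)) a.1 b.1 := by
      intro a b k _
      have h1 : (B ^ k) a.1 u * R u w ≤ (B ^ k * R) a.1 w :=
        single_term_le_mul (entries_nonneg_pow hBnn k) hRnn a.1 w u
      calc (B ^ k) a.1 u * (ρ₀ * (D ^ (N - k)) w b.1)
          = ((B ^ k) a.1 u * R u w) * (D ^ (N - k)) w b.1 := by rw [hρR]; ring
        _ ≤ ((B ^ k * R) a.1 w) * (D ^ (N - k)) w b.1 :=
            mul_le_mul_of_nonneg_right h1 (entries_nonneg_pow hDnn _ _ _)
        _ ≤ ((B ^ k * R) * D ^ (N - k)) a.1 b.1 :=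
            single_term_le_mul (entries_nonneg_mul (entries_nonneg_pow hBnn k) hRnn)
              (entries_nonneg_pow hDnn _) _ _ _
    have hab : ∀ (a : C) (b : C'),
        ∑ k ∈ Finset.range (N + 1), (B ^ k) a.1 u * (ρ₀ * (D ^ (N - k)) w b.1)
          ≤ (P ^ (N + 1)) a.1 b.1 := by
      intro a b
      have hident := pow_block_identity hPdecomp hBD hDB hDR hRR hRB N
      have hent : (P ^ (N + 1)) a.1 b.1 = (B ^ (N + 1)) a.1 b.1 + (D ^ (N + 1)) a.1 b.1
          + ∑ k ∈ Finset.range (N + 1), (B ^ k * R * D ^ (N - k)) a.1 b.1 := by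
        rw [hident]
        simp [Matrix.add_apply, Matrix.sum_apply]
      rw [hent]
      have h2 := Finset.sum_le_sum (hterm a b)
      have h3 := entries_nonneg_pow hBnn (N + 1) a.1 b.1
      have h4 := entries_nonneg_pow hDnn (N + 1) a.1 b.1
      linarith
    calc ∑ k ∈ Finset.range (N + 1), cseq k * (ρ₀ * dseq (N - k))
        = ∑ k ∈ Finset.range (N + 1), ∑ a : C, ∑ b : C',
            (B ^ k) a.1 u * (ρ₀ * (D ^ (N - k)) w b.1) := by
          refine Finset.sum_congr rfl fun k _ => ?_
          rw [hcseq, hdseq]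
          dsimp only
          rw [Finset.mul_sum Finset.univ (fun b : C' => (D ^ (N - k)) w b.1) ρ₀,
            Finset.sum_mul_sum]
      _ = ∑ a : C, ∑ k ∈ Finset.range (N + 1), ∑ b : C',
            (B ^ k) a.1 u * (ρ₀ * (D ^ (N - k)) w b.1) := Finset.sum_comm
      _ = ∑ a : C, ∑ b : C', ∑ k ∈ Finset.range (N + 1),
            (B ^ k) a.1 u * (ρ₀ * (D ^ (N - k)) w b.1) :=
          Finset.sum_congr rfl fun a _ => Finset.sum_comm
      _ ≤ ∑ a : C, ∑ b : C', (P ^ (N + 1)) a.1 b.1 :=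
          Finset.sum_le_sum fun a _ => Finset.sum_le_sum fun b _ => hab a b
  -- upper bound on the double sums
  have hG : ∀ M : ℕ, ∑ N ∈ Finset.range M, ∑ k ∈ Finset.range (N + 1),
      cseq k * (ρ₀ * dseq (N - k)) ≤ (M : ℝ) * KK := by
    intro M
    have hper : ∀ N ∈ Finset.range M, ∑ k ∈ Finset.range (N + 1),
        cseq k * (ρ₀ * dseq (N - k)) ≤ KK := by
      intro N _
      refine (hF N).trans ?_
      calc ∑ a : C, ∑ b : C', (P ^ (N + 1)) a.1 b.1
          ≤ ∑ a : C, cardC' * K := by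
            refine Finset.sum_le_sum fun a _ => ?_
            calc ∑ b : C', (P ^ (N + 1)) a.1 b.1
                ≤ (Finset.univ : Finset C').card • K :=
                  Finset.sum_le_card_nsmul _ _ _ fun b _ => hPK _ _ _
              _ = cardC' * K := by
                  rw [nsmul_eq_mul, Finset.card_univ, hcardC']
        _ = cardC * (cardC' * K) := by
            rw [Finset.sum_const, nsmul_eq_mul, Finset.card_univ, hcardC]
        _ = KK := hKK.symm
    calc ∑ N ∈ Finset.range M, ∑ k ∈ Finset.range (N + 1), cseq k * (ρ₀ * dseq (N - k))
        ≤ (Finset.range M).card • KK := Finset.sum_le_card_nsmul _ _ _ hper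
      _ = (M : ℝ) * KK := by rw [nsmul_eq_mul, Finset.card_range]
  -- Cauchy-product style lower bound
  have hprod : ∀ M1 : ℕ, (∑ k ∈ Finset.range M1, cseq k) *
      (ρ₀ * ∑ l ∈ Finset.range M1, dseq l)
      ≤ ∑ N ∈ Finset.range (2 * M1), ∑ k ∈ Finset.range (N + 1),
          cseq k * (ρ₀ * dseq (N - k)) := by
    intro M1
    have hinj : ∀ x ∈ Finset.range M1 ×ˢ Finset.range M1,
        ∀ y ∈ Finset.range M1 ×ˢ Finset.range M1,
        (⟨x.1 + x.2, x.1⟩ : Σ _ : ℕ, ℕ) = (⟨y.1 + y.2, y.1⟩ : Σ _ : ℕ, ℕ) → x = y := by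
      rintro ⟨a1, a2⟩ - ⟨b1, b2⟩ - hxy
      have h1 : a1 + a2 = b1 + b2 := congrArg Sigma.fst hxy
      have h2 : a1 = b1 := by
        have := congrArg (fun z : Σ _ : ℕ, ℕ => z.2) hxy
        simpa using this
      have h3 : a2 = b2 := by omega
      simp [h2, h3]
    have himg : (Finset.range M1 ×ˢ Finset.range M1).image
          (fun kl : ℕ × ℕ => (⟨kl.1 + kl.2, kl.1⟩ : Σ _ : ℕ, ℕ))
        ⊆ (Finset.range (2 * M1)).sigma (fun N => Finset.range (N + 1)) := by
      intro t ht
      obtain ⟨kl, hkl, rfl⟩ := Finset.mem_image.mp ht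
      obtain ⟨hk, hl⟩ := Finset.mem_product.mp hkl
      rw [Finset.mem_range] at hk hl
      rw [Finset.mem_sigma]
      exact ⟨Finset.mem_range.mpr (show kl.1 + kl.2 < 2 * M1 by omega),
        Finset.mem_range.mpr (show kl.1 < kl.1 + kl.2 + 1 by omega)⟩
    have hLHS : (∑ k ∈ Finset.range M1, cseq k) * (ρ₀ * ∑ l ∈ Finset.range M1, dseq l)
        = ∑ x ∈ (Finset.range M1 ×ˢ Finset.range M1).image
            (fun kl : ℕ × ℕ => (⟨kl.1 + kl.2, kl.1⟩ : Σ _ : ℕ, ℕ)),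
            cseq x.2 * (ρ₀ * dseq (x.1 - x.2)) := by
      rw [Finset.sum_image hinj]
      rw [Finset.mul_sum (Finset.range M1) dseq ρ₀, Finset.sum_mul_sum]
      rw [Finset.sum_product]
      refine Finset.sum_congr rfl fun k _ => Finset.sum_congr rfl fun l _ => ?_
      dsimp only
      rw [Nat.add_sub_cancel_left]
    calc (∑ k ∈ Finset.range M1, cseq k) * (ρ₀ * ∑ l ∈ Finset.range M1, dseq l)
        = ∑ x ∈ (Finset.range M1 ×ˢ Finset.range M1).image
            (fun kl : ℕ × ℕ => (⟨kl.1 + kl.2, kl.1⟩ : Σ _ : ℕ, ℕ)),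
            cseq x.2 * (ρ₀ * dseq (x.1 - x.2)) := hLHS
      _ ≤ ∑ x ∈ (Finset.range (2 * M1)).sigma (fun N => Finset.range (N + 1)),
            cseq x.2 * (ρ₀ * dseq (x.1 - x.2)) :=
          Finset.sum_le_sum_of_subset_of_nonneg himg fun x _ _ =>
            mul_nonneg (hcnn _) (mul_nonneg hρ₀pos.le (hdnn _))
      _ = ∑ N ∈ Finset.range (2 * M1), ∑ k ∈ Finset.range (N + 1),
            cseq k * (ρ₀ * dseq (N - k)) := by rw [Finset.sum_sigma]
  -- final contradiction
  set pm : ℕ := max pc pd with hpm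
  set A : ℝ := εc * εd * ρ₀ with hA
  have hApos : 0 < A := mul_pos (mul_pos hεcpos hεdpos) hρ₀pos
  set Cst : ℝ := 2 * (pc + 1) * (pd + 1) * (pm + 1) * KK with hCst
  have hfin : ∀ M0 : ℕ, A * ((M0 : ℝ) + 1) ≤ Cst := by
    intro M0
    set M1 : ℕ := M0 + pm + 1 with hM1
    set Sc : ℝ := ∑ t ∈ Finset.range M1, cseq t with hSc
    set Sd : ℝ := ∑ t ∈ Finset.range M1, dseq t with hSd
    have hScnn : 0 ≤ Sc := Finset.sum_nonneg fun t _ => hcnn t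
    have hSdnn : 0 ≤ Sd := Finset.sum_nonneg fun t _ => hdnn t
    have h1 : ((M0 : ℝ) + 1) * εc ≤ ((pc : ℝ) + 1) * Sc := by
      refine (avg_lower_bound hcnn hεcpos.le hckey M0).trans ?_
      refine mul_le_mul_of_nonneg_left ?_ (by positivity)
      refine Finset.sum_le_sum_of_subset_of_nonneg ?_ fun t _ _ => hcnn t
      refine Finset.range_subset_range.mpr (by rw [hM1, hpm]; have h1 : pc ≤ max pc pd := le_max_left _ _; have h2 : pd ≤ max pc pd := le_max_right _ _; have h3 : Finset.univ.sup pf ≤ max pc pd := le_max_left _ _; have h4 : Finset.univ.sup qf ≤ max pc pd := le_max_right _ _; omega)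
    have h2 : ((M0 : ℝ) + 1) * εd ≤ ((pd : ℝ) + 1) * Sd := by
      refine (avg_lower_bound hdnn hεdpos.le hdkey M0).trans ?_
      refine mul_le_mul_of_nonneg_left ?_ (by positivity)
      refine Finset.sum_le_sum_of_subset_of_nonneg ?_ fun t _ _ => hdnn t
      refine Finset.range_subset_range.mpr (by rw [hM1, hpm]; have h1 : pc ≤ max pc pd := le_max_left _ _; have h2 : pd ≤ max pc pd := le_max_right _ _; have h3 : Finset.univ.sup pf ≤ max pc pd := le_max_left _ _; have h4 : Finset.univ.sup qf ≤ max pc pd := le_max_right _ _; omega)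
    have h3 : Sc * (ρ₀ * Sd) ≤ ((2 * M1 : ℕ) : ℝ) * KK := (hprod M1).trans (hG (2 * M1))
    have h4 : (((M0 : ℝ) + 1) * εc) * (ρ₀ * (((M0 : ℝ) + 1) * εd))
        ≤ (((pc : ℝ) + 1) * Sc) * (ρ₀ * (((pd : ℝ) + 1) * Sd)) := by
      refine mul_le_mul h1 ?_ ?_ ?_
      · exact mul_le_mul_of_nonneg_left h2 hρ₀pos.le
      · positivity
      · positivity
    have h5 : (((pc : ℝ) + 1) * Sc) * (ρ₀ * (((pd : ℝ) + 1) * Sd))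
        = (((pc : ℝ) + 1) * ((pd : ℝ) + 1)) * (Sc * (ρ₀ * Sd)) := by ring
    have h6 : (((pc : ℝ) + 1) * ((pd : ℝ) + 1)) * (Sc * (ρ₀ * Sd))
        ≤ (((pc : ℝ) + 1) * ((pd : ℝ) + 1)) * (((2 * M1 : ℕ) : ℝ) * KK) :=
      mul_le_mul_of_nonneg_left h3 (by positivity)
    have hM1cast : ((2 * M1 : ℕ) : ℝ) = 2 * ((M0 : ℝ) + (pm : ℝ) + 1) := by
      rw [hM1]; push_cast; ring
    have h7 : 2 * ((M0 : ℝ) + (pm : ℝ) + 1) ≤ 2 * (((pm : ℝ) + 1) * ((M0 : ℝ) + 1)) := by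
      have hm0 : (0 : ℝ) ≤ (M0 : ℝ) := Nat.cast_nonneg _
      have hpm0 : (0 : ℝ) ≤ (pm : ℝ) := Nat.cast_nonneg _
      nlinarith
    have h8 : A * (((M0 : ℝ) + 1) * ((M0 : ℝ) + 1))
        ≤ Cst * ((M0 : ℝ) + 1) := by
      have hlhs : (((M0 : ℝ) + 1) * εc) * (ρ₀ * (((M0 : ℝ) + 1) * εd))
          = A * (((M0 : ℝ) + 1) * ((M0 : ℝ) + 1)) := by rw [hA]; ring
      have hmid := h4.trans (h5.le.trans h6)
      rw [hlhs] at hmid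
      refine hmid.trans ?_
      rw [hM1cast, hCst]
      calc (((pc : ℝ) + 1) * ((pd : ℝ) + 1)) * (2 * ((M0 : ℝ) + (pm : ℝ) + 1) * KK)
          ≤ (((pc : ℝ) + 1) * ((pd : ℝ) + 1)) * (2 * (((pm : ℝ) + 1) * ((M0 : ℝ) + 1)) * KK) := by
            refine mul_le_mul_of_nonneg_left ?_ (by positivity)
            exact mul_le_mul_of_nonneg_right h7 hKK0
        _ = 2 * ((pc : ℝ) + 1) * ((pd : ℝ) + 1) * ((pm : ℝ) + 1) * KK * ((M0 : ℝ) + 1) := by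
            ring
    have hM0pos : (0 : ℝ) < (M0 : ℝ) + 1 := by positivity
    have := le_of_mul_le_mul_right (by
      calc (A * ((M0 : ℝ) + 1)) * ((M0 : ℝ) + 1)
          = A * (((M0 : ℝ) + 1) * ((M0 : ℝ) + 1)) := by ring
        _ ≤ Cst * ((M0 : ℝ) + 1) := h8) hM0pos
    exact this
  obtain ⟨M0, hM0⟩ := exists_nat_gt (Cst / A)
  have hlt : Cst < A * ((M0 : ℝ) + 1) := by
    have h1 : Cst / A < (M0 : ℝ) + 1 := hM0.trans (by linarith)
    calc Cst = A * (Cst / A) := by field_simp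
      _ < A * ((M0 : ℝ) + 1) := by
          exact mul_lt_mul_of_pos_left h1 hApos
  exact absurd (hfin M0) (not_le.mpr hlt)
end
end

section
/- Let P be a nonnegative stable n×n matrix, C the union of its critical classes, D the set of nodes not in C that some critical node has access to, U the set of nodes not in C having access to some critical node, and I the remaining nodes. Then U, C, D, I are pairwise disjoint, and the spectral radii of P_{UU}, P_{DD}, P_{II} are all strictly less than 1. -/
noncomputable section
open Filter Topology Set
open scoped Classical

namespace StableAux

variable {ι : Type*} [Fintype ι] [DecidableEq ι]
set_option linter.unusedSectionVars false

lemma mulVec_apply {α : Type*} [NonUnitalNonAssocSemiring α] (A : Matrix ι ι α) (x : ι → α)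
    (i : ι) : A.mulVec x i = ∑ j, A i j * x j := rfl

lemma mulVec_nonneg {A : Matrix ι ι ℝ} {x : ι → ℝ} (hA : ∀ i j, 0 ≤ A i j)
    (hx : ∀ i, 0 ≤ x i) : ∀ i, 0 ≤ A.mulVec x i := fun i =>
  Finset.sum_nonneg fun j _ => mul_nonneg (hA i j) (hx j)

lemma mulVec_mono {A : Matrix ι ι ℝ} {x y : ι → ℝ} (hA : ∀ i j, 0 ≤ A i j)
    (h : ∀ i, x i ≤ y i) : ∀ i, A.mulVec x i ≤ A.mulVec y i := fun i =>
  Finset.sum_le_sum fun j _ => mul_le_mul_of_nonneg_left (h j) (hA i j)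

lemma pow_entry_nonneg {A : Matrix ι ι ℝ} (hA : ∀ i j, 0 ≤ A i j) :
    ∀ (k : ℕ) (i j : ι), 0 ≤ (A ^ k) i j := by
  intro k
  induction k with
  | zero =>
    intro i j
    classical
    rw [pow_zero, Matrix.one_apply]
    split <;> norm_num
  | succ k ih =>
    intro i j
    rw [pow_succ, Matrix.mul_apply]
    exact Finset.sum_nonneg fun m _ => mul_nonneg (ih i m) (hA m j)

lemma subinv_pow {A : Matrix ι ι ℝ} {x : ι → ℝ} (hA : ∀ i j, 0 ≤ A i j)
    (h : ∀ i, x i ≤ A.mulVec x i) : ∀ (k : ℕ) (i : ι), x i ≤ (A ^ k).mulVec x i := by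
  intro k
  induction k with
  | zero => intro i; rw [pow_zero, Matrix.one_mulVec]
  | succ k ih =>
    intro i
    have h2 : A.mulVec x i ≤ A.mulVec ((A ^ k).mulVec x) i := mulVec_mono hA ih i
    calc x i ≤ A.mulVec x i := h i
      _ ≤ A.mulVec ((A ^ k).mulVec x) i := h2
      _ = (A ^ (k+1)).mulVec x i := by rw [Matrix.mulVec_mulVec, ← pow_succ']

end StableAux

namespace StableAux
set_option linter.unusedSectionVars false

variable {ι : Type*} [Fintype ι]

lemma exists_eigenvec [DecidableEq ι] {Q : Matrix ι ι ℝ} {μ : ℂ}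
    (h : μ ∈ spectrum ℂ (Q.map (fun a => (a : ℂ)))) :
    ∃ v : ι → ℂ, v ≠ 0 ∧ (Q.map (fun a => (a : ℂ))).mulVec v = μ • v := by
  rw [spectrum.mem_iff, Matrix.isUnit_iff_isUnit_det, isUnit_iff_ne_zero, not_not] at h
  obtain ⟨v, hv0, hv⟩ := (Matrix.exists_mulVec_eq_zero_iff).mpr h
  refine ⟨v, hv0, ?_⟩
  rw [Matrix.sub_mulVec] at hv
  have h2 : (algebraMap ℂ (Matrix ι ι ℂ) μ).mulVec v = μ • v := by
    rw [Algebra.algebraMap_eq_smul_one, Matrix.smul_mulVec, Matrix.one_mulVec]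
  rw [h2] at hv
  have := sub_eq_zero.mp hv
  exact this.symm

lemma specSet_finite [DecidableEq ι] (Q : Matrix ι ι ℝ) :
    {r : ℝ | ∃ μ : ℂ, μ ∈ spectrum ℂ (Q.map (fun a => (a : ℂ))) ∧ r = ‖μ‖}.Finite := by
  have h1 : {r : ℝ | ∃ μ : ℂ, μ ∈ spectrum ℂ (Q.map (fun a => (a : ℂ))) ∧ r = ‖μ‖}
      = (fun z : ℂ => ‖z‖) '' (spectrum ℂ (Q.map (fun a => (a : ℂ)))) := by
    ext r; simp [Set.image, eq_comm]
  rw [h1]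
  exact (Matrix.finite_spectrum _).image _

lemma exists_absEigen_of_not_lt_one [DecidableEq ι] (Q : Matrix ι ι ℝ) (h : ¬ SpecRad Q < 1) :
    ∃ (μ : ℂ) (v : ι → ℂ), 1 ≤ ‖μ‖ ∧ v ≠ 0 ∧
      (Q.map (fun a => (a : ℂ))).mulVec v = μ • v := by
  have hinst : ‹DecidableEq ι› = Classical.decEq ι := Subsingleton.elim _ _
  subst hinst
  unfold SpecRad at h
  by_contra hc
  push_neg at hc
  have hall : ∀ r ∈ {r : ℝ | ∃ μ : ℂ, μ ∈ spectrum ℂ (Q.map (fun a => (a : ℂ)))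
      ∧ r = ‖μ‖}, r < 1 := by
    rintro r ⟨μ, hμ, rfl⟩
    by_contra hr
    push_neg at hr
    obtain ⟨v, hv0, hev⟩ := exists_eigenvec hμ
    exact (hc μ v hr hv0) hev
  rcases Set.eq_empty_or_nonempty {r : ℝ | ∃ μ : ℂ, μ ∈ spectrum ℂ (Q.map (fun a => (a : ℂ)))
      ∧ r = ‖μ‖} with he | hne
  · rw [he, Real.sSup_empty] at h; exact h one_pos
  · exact h (hall _ (hne.csSup_mem (specSet_finite Q)))

end StableAux

namespace StableAux
set_option linter.unusedSectionVars false

variable {ι : Type*} [Fintype ι] [DecidableEq ι]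

lemma map_pow' (Q : Matrix ι ι ℝ) (k : ℕ) :
    (Q ^ k).map (fun a => (a : ℂ)) = (Q.map (fun a => (a : ℂ))) ^ k := by
  have h := map_pow (Complex.ofRealHom.mapMatrix (m := ι)) Q k
  simp only [RingHom.mapMatrix_apply] at h
  exact h

lemma specRad_le_one (Q : Matrix ι ι ℝ) {M : ℝ}
    (hb : ∀ (k : ℕ) i j, |(Q ^ k) i j| ≤ M) : SpecRad Q ≤ 1 := by
  have hinst : ‹DecidableEq ι› = Classical.decEq ι := Subsingleton.elim _ _
  subst hinst
  unfold SpecRad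
  apply Real.sSup_le _ zero_le_one
  rintro r ⟨μ, hμ, rfl⟩
  by_contra hgt
  push_neg at hgt
  obtain ⟨v, hv0, hev⟩ := exists_eigenvec hμ
  obtain ⟨i, hvi⟩ : ∃ i, v i ≠ 0 := Function.ne_iff.mp hv0
  have hM0 : 0 ≤ M := le_trans (abs_nonneg _) (hb 0 i i)
  have hpow : ∀ k : ℕ, ((Q ^ k).map (fun a => (a : ℂ))).mulVec v = μ ^ k • v := by
    intro k
    induction k with
    | zero => simp [Matrix.one_mulVec, Matrix.map_one]
    | succ k ih =>
      rw [map_pow'] at ih ⊢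
      rw [pow_succ', ← Matrix.mulVec_mulVec, ih, Matrix.mulVec_smul, hev, pow_succ', mul_smul]
      rw [smul_comm]
  have key : ∀ k : ℕ, (‖μ‖) ^ k * ‖v i‖ ≤
      (Fintype.card ι : ℝ) * (M * ‖v‖) := by
    intro k
    have h1 : ((Q ^ k).map (fun a => (a : ℂ))).mulVec v i = μ ^ k * v i := by
      rw [hpow k]; simp
    have h2 : ‖μ ^ k * v i‖ ≤ ∑ j : ι, |(Q ^ k) i j| * ‖v j‖ := by
      rw [← h1, mulVec_apply]
      refine (norm_sum_le _ _).trans ?_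
      refine Finset.sum_le_sum fun j _ => ?_
      rw [norm_mul, Matrix.map_apply, Complex.norm_real, Real.norm_eq_abs]
    have h3 : ∑ j : ι, |(Q ^ k) i j| * ‖v j‖ ≤
        (Fintype.card ι : ℝ) * (M * ‖v‖) := by
      calc ∑ j : ι, |(Q ^ k) i j| * ‖v j‖
          ≤ ∑ _j : ι, M * ‖v‖ := by
            refine Finset.sum_le_sum fun j _ => ?_
            refine mul_le_mul (hb k i j) ?_ (norm_nonneg _) hM0
            exact norm_le_pi_norm v j
        _ = (Fintype.card ι : ℝ) * (M * ‖v‖) := by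
            rw [Finset.sum_const, Finset.card_univ, nsmul_eq_mul]
    rw [norm_mul, norm_pow] at h2
    exact h2.trans h3
  obtain ⟨k, hk⟩ := pow_unbounded_of_one_lt
    ((Fintype.card ι : ℝ) * (M * ‖v‖) / ‖v i‖) hgt
  have hvi' : 0 < ‖v i‖ := norm_pos_iff.mpr hvi
  have := key k
  rw [div_lt_iff₀ hvi'] at hk
  linarith

end StableAux

open scoped ENNReal NNReal
namespace StableAux
set_option linter.unusedSectionVars false

variable {ι : Type*} [Fintype ι] [DecidableEq ι]

lemma pow_entries_small (Q : Matrix ι ι ℝ) (h : SpecRad Q < 1) {ε : ℝ} (hε : 0 < ε) :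
    ∃ k : ℕ, ∀ i j, |(Q ^ k) i j| < ε := by
  have hinst : ‹DecidableEq ι› = Classical.decEq ι := Subsingleton.elim _ _
  subst hinst
  letI : NormedRing (Matrix ι ι ℂ) := Matrix.linftyOpNormedRing
  letI : NormedAlgebra ℂ (Matrix ι ι ℂ) := Matrix.linftyOpNormedAlgebra
  haveI : CompleteSpace (Matrix ι ι ℂ) := FiniteDimensional.complete ℂ _
  set A := Q.map (fun a => (a : ℂ)) with hA
  have hentry : ∀ (B : Matrix ι ι ℂ) i j, ‖B i j‖ ≤ ‖B‖ := by
    intro B i j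
    have h1 : B.mulVec (Pi.single j 1) = fun i => B i j * 1 := Matrix.mulVec_single B j 1
    have h2 : ‖B.mulVec (Pi.single j 1)‖ ≤ ‖B‖ * ‖(Pi.single j (1:ℂ) : ι → ℂ)‖ :=
      Matrix.linfty_opNorm_mulVec B _
    have h3 : ‖(Pi.single j (1:ℂ) : ι → ℂ)‖ ≤ 1 := by
      rw [pi_norm_le_iff_of_nonneg zero_le_one]
      intro b
      rcases eq_or_ne b j with rfl | hb
      · simp
      · simp [Pi.single_eq_of_ne hb]
    have h4 : ‖B i j‖ ≤ ‖B.mulVec (Pi.single j 1)‖ := by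
      have := norm_le_pi_norm (B.mulVec (Pi.single j 1)) i
      rw [h1] at this ⊢
      simpa using this
    calc ‖B i j‖ ≤ ‖B‖ * ‖(Pi.single j (1:ℂ) : ι → ℂ)‖ := h4.trans h2
      _ ≤ ‖B‖ * 1 := by
          exact mul_le_mul_of_nonneg_left h3 (norm_nonneg _)
      _ = ‖B‖ := mul_one _
  have hsrad : spectralRadius ℂ A < 1 := by
    unfold SpecRad at h
    have hbdd : ∀ μ ∈ spectrum ℂ A, (‖μ‖₊ : ℝ≥0∞) ≤
        ENNReal.ofReal (sSup {r : ℝ | ∃ μ : ℂ, μ ∈ spectrum ℂ (Q.map (fun a => (a : ℂ)))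
          ∧ r = ‖μ‖}) := by
      intro μ hμ
      have hmem : ‖μ‖ ∈ {r : ℝ | ∃ μ : ℂ, μ ∈ spectrum ℂ (Q.map (fun a => (a : ℂ)))
          ∧ r = ‖μ‖} := ⟨μ, hμ, rfl⟩
      have hle : ‖μ‖ ≤ sSup {r : ℝ | ∃ μ : ℂ, μ ∈ spectrum ℂ (Q.map (fun a => (a : ℂ)))
          ∧ r = ‖μ‖} := le_csSup (specSet_finite Q).bddAbove hmem
      have : (‖μ‖₊ : ℝ≥0∞) = ENNReal.ofReal (‖μ‖) := by
        rw [ofReal_norm]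
        rfl
      rw [this]
      exact ENNReal.ofReal_le_ofReal hle
    calc spectralRadius ℂ A ≤ ENNReal.ofReal (sSup {r : ℝ | ∃ μ : ℂ,
          μ ∈ spectrum ℂ (Q.map (fun a => (a : ℂ))) ∧ r = ‖μ‖}) := iSup₂_le hbdd
      _ < 1 := ENNReal.ofReal_lt_one.mpr h
  obtain ⟨t, ht1, ht2⟩ := exists_between hsrad
  have hg := spectrum.pow_nnnorm_pow_one_div_tendsto_nhds_spectralRadius A
  have hev1 : ∀ᶠ k : ℕ in atTop, (‖A ^ k‖₊ : ℝ≥0∞) ^ (1 / (k : ℝ)) < t :=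
    hg.eventually_lt_const ht1
  have ht0 : Tendsto (fun k : ℕ => t ^ k) atTop (𝓝 0) :=
    ENNReal.tendsto_pow_atTop_nhds_zero_of_lt_one ht2
  have hev2 : ∀ᶠ k : ℕ in atTop, t ^ k < ENNReal.ofReal ε :=
    ht0.eventually_lt_const (ENNReal.ofReal_pos.mpr hε)
  obtain ⟨k, ⟨h1, h2⟩, h3⟩ := ((hev1.and hev2).and (eventually_ge_atTop 1)).exists
  have hk0 : (k : ℝ) ≠ 0 := Nat.cast_ne_zero.mpr (by omega)
  have hlt : (‖A ^ k‖₊ : ℝ≥0∞) < t ^ k := by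
    have hr := ENNReal.rpow_lt_rpow h1 (by positivity : (0:ℝ) < (k : ℝ))
    rw [← ENNReal.rpow_mul, one_div_mul_cancel hk0, ENNReal.rpow_one,
      ENNReal.rpow_natCast] at hr
    exact hr
  have hnorm : ‖A ^ k‖ < ε := by
    have h5 : (‖A ^ k‖₊ : ℝ≥0∞) < ENNReal.ofReal ε := hlt.trans h2
    change ‖A ^ k‖ₑ < _ at h5
    rw [← ofReal_norm] at h5
    exact (ENNReal.ofReal_lt_ofReal_iff hε).mp h5
  refine ⟨k, fun i j => ?_⟩
  have h6 : ((Q ^ k) i j : ℂ) = (A ^ k) i j := by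
    rw [hA, ← map_pow', Matrix.map_apply]
  have h7 : |(Q ^ k) i j| = ‖(A ^ k) i j‖ := by
    rw [← h6, Complex.norm_real, Real.norm_eq_abs]
  rw [h7]
  exact lt_of_le_of_lt (hentry _ i j) hnorm

end StableAux

namespace StableAux
set_option linter.unusedSectionVars false
open scoped Matrix

variable {ι : Type*} [Fintype ι] [DecidableEq ι]

lemma one_le_specRad_of_subinv (Q : Matrix ι ι ℝ) (hQ : ∀ i j, 0 ≤ Q i j) {u : ι → ℝ}
    (hu0 : ∀ i, 0 ≤ u i) (hsub : ∀ i, u i ≤ Q.mulVec u i) {i₀ : ι} (hpos : 0 < u i₀) :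
    1 ≤ SpecRad Q := by
  by_contra h
  push_neg at h
  have hB : ∀ j, u j ≤ ‖u‖ := fun j => by
    have := norm_le_pi_norm u j
    rw [Real.norm_eq_abs] at this
    exact (le_abs_self _).trans this
  have hB0 : (0:ℝ) ≤ ‖u‖ := norm_nonneg u
  set c : ℝ := (Fintype.card ι : ℝ) * ‖u‖ with hc
  have hc0 : 0 ≤ c := by positivity
  have hε : 0 < u i₀ / (c + 1) := by positivity
  obtain ⟨k, hk⟩ := pow_entries_small Q h hε
  have h1 : u i₀ ≤ (Q ^ k).mulVec u i₀ := subinv_pow hQ hsub k i₀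
  have h2 : (Q ^ k).mulVec u i₀ ≤ c * (u i₀ / (c + 1)) := by
    rw [mulVec_apply]
    calc ∑ j, (Q ^ k) i₀ j * u j ≤ ∑ _j : ι, (u i₀ / (c + 1)) * ‖u‖ := by
          refine Finset.sum_le_sum fun j _ => ?_
          refine mul_le_mul ?_ (hB j) (hu0 j) hε.le
          exact ((le_abs_self _).trans (hk i₀ j).le)
      _ = c * (u i₀ / (c + 1)) := by
          rw [Finset.sum_const, Finset.card_univ, nsmul_eq_mul, hc]; ring
  have h3 : c * (u i₀ / (c + 1)) < u i₀ := by
    have hx : 0 < u i₀ / (c + 1) := hε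
    have : c * (u i₀ / (c + 1)) < (c + 1) * (u i₀ / (c + 1)) := by
      exact mul_lt_mul_of_pos_right (by linarith) hx
    rw [mul_div_cancel₀ _ (by linarith : c + 1 ≠ 0)] at this
    exact this
  linarith

lemma spectrum_transpose [DecidableEq ι] (A : Matrix ι ι ℂ) :
    spectrum ℂ Aᵀ = spectrum ℂ A := by
  ext μ
  rw [spectrum.mem_iff, spectrum.mem_iff, Matrix.isUnit_iff_isUnit_det,
    Matrix.isUnit_iff_isUnit_det]
  have : algebraMap ℂ (Matrix ι ι ℂ) μ - Aᵀ = (algebraMap ℂ (Matrix ι ι ℂ) μ - A)ᵀ := by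
    rw [Matrix.transpose_sub, Matrix.algebraMap_eq_diagonal, Matrix.diagonal_transpose]
  rw [this, Matrix.det_transpose]

lemma specRad_transpose (Q : Matrix ι ι ℝ) : SpecRad Qᵀ = SpecRad Q := by
  have hinst : ‹DecidableEq ι› = Classical.decEq ι := Subsingleton.elim _ _
  subst hinst
  unfold SpecRad
  congr 1
  ext r
  constructor
  · rintro ⟨μ, hμ, rfl⟩
    rw [Matrix.transpose_map, spectrum_transpose] at hμ
    exact ⟨μ, hμ, rfl⟩
  · rintro ⟨μ, hμ, rfl⟩
    refine ⟨μ, ?_, rfl⟩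
    rw [Matrix.transpose_map, spectrum_transpose]
    exact hμ

lemma positivize (Q : Matrix ι ι ℝ) (hQ : ∀ i j, 0 ≤ Q i j)
    (hconn : ∀ i j, Relation.ReflTransGen (fun a b => 0 < Q a b) i j) {w : ι → ℝ}
    (hw0 : ∀ i, 0 ≤ w i) (hne : ∃ i, 0 < w i) (hsub : ∀ i, w i ≤ Q.mulVec w i) :
    ∃ v : ι → ℝ, (∀ i, 0 < v i) ∧ ∀ i, v i ≤ Q.mulVec v i := by
  classical
  set B : Matrix ι ι ℝ := 1 + Q with hBdef
  have hB0 : ∀ i j, 0 ≤ B i j := by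
    intro i j
    have h1 : (0:ℝ) ≤ (1 : Matrix ι ι ℝ) i j := by
      rw [Matrix.one_apply]; split <;> norm_num
    have : B i j = (1 : Matrix ι ι ℝ) i j + Q i j := rfl
    rw [this]
    exact add_nonneg h1 (hQ i j)
  have hBP : ∀ (m : ℕ) i j, 0 ≤ (B ^ m) i j := pow_entry_nonneg hB0
  have hBmono : ∀ (m : ℕ) i j, (B ^ m) i j ≤ (B ^ (m+1)) i j := by
    intro m i j
    rw [pow_succ, Matrix.mul_apply]
    have hjj : (1:ℝ) ≤ B j j := by
      have : B j j = (1 : Matrix ι ι ℝ) j j + Q j j := rfl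
      rw [this, Matrix.one_apply_eq]
      linarith [hQ j j]
    calc (B ^ m) i j = (B ^ m) i j * 1 := (mul_one _).symm
      _ ≤ (B ^ m) i j * B j j := mul_le_mul_of_nonneg_left hjj (hBP m i j)
      _ ≤ ∑ x, (B ^ m) i x * B x j :=
          Finset.single_le_sum (fun x _ => mul_nonneg (hBP m i x) (hB0 x j))
            (Finset.mem_univ j)
  have hBmono' : ∀ {m m' : ℕ}, m ≤ m' → ∀ i j, (B ^ m) i j ≤ (B ^ m') i j := by
    intro m m' hmm
    induction m', hmm using Nat.le_induction with
    | base => exact fun i j => le_rfl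
    | succ m' hm ih => exact fun i j => (ih i j).trans (hBmono m' i j)
  have hreach : ∀ i j, ∃ m, 0 < (B ^ m) i j := by
    intro i j
    induction hconn i j with
    | refl => exact ⟨0, by rw [pow_zero, Matrix.one_apply_eq]; norm_num⟩
    | @tail b c hab hbc ih =>
      obtain ⟨m, hm⟩ := ih
      refine ⟨m + 1, ?_⟩
      rw [pow_succ, Matrix.mul_apply]
      have hBbc : 0 < B b c := by
        have : B b c = (1 : Matrix ι ι ℝ) b c + Q b c := rfl
        rw [this]
        have h1 : (0:ℝ) ≤ (1 : Matrix ι ι ℝ) b c := by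
          rw [Matrix.one_apply]; split <;> norm_num
        linarith
      have hterm : 0 < (B ^ m) i b * B b c := mul_pos hm hBbc
      calc (0:ℝ) < (B ^ m) i b * B b c := hterm
        _ ≤ ∑ x, (B ^ m) i x * B x c :=
            Finset.single_le_sum (fun x _ => mul_nonneg (hBP m i x) (hB0 x c))
              (Finset.mem_univ b)
  choose f hf using hreach
  rcases isEmpty_or_nonempty ι with hι | hι
  · obtain ⟨i, _⟩ := hne; exact (hι.false i).elim
  set m : ℕ := Finset.univ.sup fun i : ι => Finset.univ.sup (f i) with hm
  have hfm : ∀ i j, f i j ≤ m := by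
    intro i j
    calc f i j ≤ Finset.univ.sup (f i) := Finset.le_sup (Finset.mem_univ j)
      _ ≤ m := Finset.le_sup (f := fun i : ι => Finset.univ.sup (f i)) (Finset.mem_univ i)
  have hBm : ∀ i j, 0 < (B ^ m) i j := fun i j =>
    lt_of_lt_of_le (hf i j) (hBmono' (hfm i j) i j)
  obtain ⟨j₀, hj₀⟩ := hne
  refine ⟨(B ^ m).mulVec w, fun i => ?_, fun i => ?_⟩
  · rw [mulVec_apply]
    calc (0:ℝ) < (B ^ m) i j₀ * w j₀ := mul_pos (hBm i j₀) hj₀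
      _ ≤ ∑ x, (B ^ m) i x * w x :=
          Finset.single_le_sum (fun x _ => mul_nonneg (hBP m i x) (hw0 x))
            (Finset.mem_univ j₀)
  · have hcomm : Q * B ^ m = B ^ m * Q := by
      have h1 : Commute Q B := by
        rw [hBdef]
        exact (Commute.one_right Q).add_right (Commute.refl Q)
      exact (h1.pow_right m).eq
    calc (B ^ m).mulVec w i ≤ (B ^ m).mulVec (Q.mulVec w) i :=
          mulVec_mono (hBP m) hsub i
      _ = (B ^ m * Q).mulVec w i := by rw [Matrix.mulVec_mulVec]
      _ = (Q * B ^ m).mulVec w i := by rw [hcomm]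
      _ = Q.mulVec ((B ^ m).mulVec w) i := by rw [Matrix.mulVec_mulVec]

end StableAux

namespace StableAux
set_option linter.unusedSectionVars false
open scoped Matrix

variable {n : ℕ}

lemma pow_bounded (P : Matrix (Fin n) (Fin n) ℝ) (hstab : MatStable P) :
    ∃ M : ℝ, ∀ (k : ℕ) i j, |(P ^ k) i j| ≤ M := by
  choose c hc using fun j => hstab (Pi.single j 1)
  refine ⟨∑ j, c j, fun k i j => ?_⟩
  have h1 : (P ^ k).mulVec (Pi.single j 1) = fun i => (P ^ k) i j := by
    rw [Matrix.mulVec_single]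
    simp
    rfl
  have h2 : |(P ^ k) i j| ≤ c j := by
    have h3 := hc j k
    rw [h1] at h3
    have h4 := norm_le_pi_norm (fun i => (P ^ k) i j) i
    rw [Real.norm_eq_abs] at h4
    exact h4.trans h3
  have h5 : ∀ j', 0 ≤ c j' := fun j' => le_trans (norm_nonneg _) (hc j' 0)
  exact h2.trans (Finset.single_le_sum (fun j' _ => h5 j') (Finset.mem_univ j))

lemma sum_ext (P : Matrix (Fin n) (Fin n) ℝ) (S : Set (Fin n)) [Fintype ↥S]
    (u : ↥S → ℝ) (w' : Fin n → ℝ) (h1 : ∀ (i : Fin n) (h : i ∈ S), w' i = u ⟨i, h⟩)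
    (h2 : ∀ i, i ∉ S → w' i = 0) (i : Fin n) :
    ∑ j, P i j * w' j = ∑ x : ↥S, P i x.1 * u x := by
  classical
  have hs : ∑ j ∈ Finset.univ.filter (· ∈ S), P i j * w' j = ∑ x : ↥S, P i x.1 * u x := by
    rw [Finset.sum_subtype (p := (· ∈ S)) (Finset.univ.filter (· ∈ S)) (by simp)
      (fun j => P i j * w' j)]
    refine Finset.sum_congr rfl fun x _ => ?_
    rw [h1 x.1 x.2]
  rw [← hs]
  symm
  apply Finset.sum_subset (Finset.filter_subset _ _)
  intro j _ hj
  rw [Finset.mem_filter] at hj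
  push_neg at hj
  rw [h2 j (hj (Finset.mem_univ j)), mul_zero]

lemma sub_pow_le (P : Matrix (Fin n) (Fin n) ℝ) (hpos : ∀ i j, 0 ≤ P i j)
    (S : Set (Fin n)) [Fintype ↥S] :
    ∀ (k : ℕ) (a b : ↥S), ((Matrix.of fun i j : S => P i.1 j.1) ^ k) a b ≤ (P ^ k) a.1 b.1 := by
  intro k
  set Q : Matrix ↥S ↥S ℝ := Matrix.of fun i j : S => P i.1 j.1 with hQ
  have hQpos : ∀ a b : ↥S, 0 ≤ Q a b := fun a b => hpos a.1 b.1
  induction k with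
  | zero =>
    intro a b
    rw [pow_zero, pow_zero, Matrix.one_apply, Matrix.one_apply]
    rcases eq_or_ne a b with rfl | hab
    · simp
    · rw [if_neg hab, if_neg (fun hh => hab (Subtype.ext hh))]
  | succ k ih =>
    intro a b
    rw [pow_succ, pow_succ, Matrix.mul_apply, Matrix.mul_apply]
    have step1 : ∑ x : ↥S, (Q ^ k) a x * Q x b ≤ ∑ x : ↥S, (P ^ k) a.1 x.1 * P x.1 b.1 := by
      refine Finset.sum_le_sum fun x _ => ?_
      exact mul_le_mul_of_nonneg_right (ih a x) (hpos x.1 b.1)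
    have step2 : ∑ x : ↥S, (P ^ k) a.1 x.1 * P x.1 b.1
        = ∑ j ∈ Finset.univ.filter (· ∈ S), (P ^ k) a.1 j * P j b.1 :=
      (Finset.sum_subtype (p := (· ∈ S)) (Finset.univ.filter (· ∈ S)) (by simp)
        (fun j => (P ^ k) a.1 j * P j b.1)).symm
    have step3 : ∑ j ∈ Finset.univ.filter (· ∈ S), (P ^ k) a.1 j * P j b.1
        ≤ ∑ j, (P ^ k) a.1 j * P j b.1 := by
      apply Finset.sum_le_sum_of_subset_of_nonneg (Finset.filter_subset _ _)
      intro j _ _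
      exact mul_nonneg (pow_entry_nonneg hpos k a.1 j) (hpos j b.1)
    exact step1.trans (step2 ▸ step3)

lemma specRad_sub_le_one (P : Matrix (Fin n) (Fin n) ℝ) (hpos : ∀ i j, 0 ≤ P i j)
    (hstab : MatStable P) (S : Set (Fin n)) [Fintype ↥S] :
    SpecRad (Matrix.of fun i j : S => P i.1 j.1) ≤ 1 := by
  obtain ⟨M, hM⟩ := pow_bounded P hstab
  apply specRad_le_one _ (M := M)
  intro k a b
  have hQpos : ∀ a b : ↥S, 0 ≤ (Matrix.of fun i j : S => P i.1 j.1) a b :=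
    fun a b => hpos a.1 b.1
  rw [abs_of_nonneg (pow_entry_nonneg hQpos k a b)]
  exact (sub_pow_le P hpos S k a b).trans ((le_abs_self _).trans (hM k a.1 b.1))

lemma accessM_transpose (P : Matrix (Fin n) (Fin n) ℝ) {a b : Fin n} :
    AccessM Pᵀ a b ↔ AccessM P b a := by
  unfold AccessM
  exact Relation.reflTransGen_swap

lemma access_pow (P : Matrix (Fin n) (Fin n) ℝ) (hpos : ∀ i j, 0 ≤ P i j) {a b : Fin n}
    (h : AccessM P a b) : ∃ k : ℕ, 0 < (P ^ k) a b := by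
  induction h with
  | refl => exact ⟨0, by rw [pow_zero, Matrix.one_apply_eq]; norm_num⟩
  | @tail c d hac hcd ih =>
    obtain ⟨k, hk⟩ := ih
    refine ⟨k + 1, ?_⟩
    rw [pow_succ, Matrix.mul_apply]
    calc (0:ℝ) < (P ^ k) a c * P c d := mul_pos hk hcd
      _ ≤ ∑ x, (P ^ k) a x * P x d :=
          Finset.single_le_sum (fun x _ => mul_nonneg (pow_entry_nonneg hpos k a x) (hpos x d))
            (Finset.mem_univ c)

lemma exists_exit (P : Matrix (Fin n) (Fin n) ℝ) {S : Set (Fin n)} {a b : Fin n}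
    (h : AccessM P a b) (ha : a ∈ S) (hb : b ∉ S) :
    ∃ c ∈ S, ∃ d, d ∉ S ∧ 0 < P c d ∧ AccessM P d b := by
  induction h with
  | refl => exact absurd ha hb
  | @tail c d hac hcd ih =>
    by_cases hc : c ∈ S
    · exact ⟨c, hc, d, hb, hcd, Relation.ReflTransGen.refl⟩
    · obtain ⟨c', hc', d', hd', he, hacc⟩ := ih hc
      exact ⟨c', hc', d', hd', he, hacc.tail hcd⟩

lemma access_in_class (P : Matrix (Fin n) (Fin n) ℝ) (i₀ : Fin n) :
    ∀ {a b : Fin n}, AccessM P a b →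
      a ∈ {j | AccessM P i₀ j ∧ AccessM P j i₀} → b ∈ {j | AccessM P i₀ j ∧ AccessM P j i₀} →
      Relation.ReflTransGen (fun x y => 0 < P x y ∧ x ∈ {j | AccessM P i₀ j ∧ AccessM P j i₀}
        ∧ y ∈ {j | AccessM P i₀ j ∧ AccessM P j i₀}) a b := by
  intro a b h
  induction h with
  | refl => intro _ _; exact Relation.ReflTransGen.refl
  | @tail c d hac hcd ih =>
    intro ha hd
    have hc : c ∈ {j | AccessM P i₀ j ∧ AccessM P j i₀} := by
      constructor
      · exact Relation.ReflTransGen.trans ha.1 hac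
      · exact Relation.ReflTransGen.trans
          (Relation.ReflTransGen.single (r := fun x y : Fin n => 0 < P x y) hcd) hd.2
    exact (ih ha hc).tail ⟨hcd, hc, hd⟩

lemma class_conn (P : Matrix (Fin n) (Fin n) ℝ) (i₀ : Fin n)
    [Fintype ↥{j | AccessM P i₀ j ∧ AccessM P j i₀}] :
    ∀ x y : ↥{j | AccessM P i₀ j ∧ AccessM P j i₀}, Relation.ReflTransGen
      (fun a b : ↥{j | AccessM P i₀ j ∧ AccessM P j i₀} =>
        0 < (Matrix.of fun i j : {j | AccessM P i₀ j ∧ AccessM P j i₀} => P i.1 j.1) a b)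
      x y := by
  have key : ∀ {a b : Fin n}, Relation.ReflTransGen
      (fun x y => 0 < P x y ∧ x ∈ {j | AccessM P i₀ j ∧ AccessM P j i₀}
        ∧ y ∈ {j | AccessM P i₀ j ∧ AccessM P j i₀}) a b →
      ∀ (ha : a ∈ {j | AccessM P i₀ j ∧ AccessM P j i₀})
        (hb : b ∈ {j | AccessM P i₀ j ∧ AccessM P j i₀}),
      Relation.ReflTransGen
        (fun a b : ↥{j | AccessM P i₀ j ∧ AccessM P j i₀} =>
          0 < (Matrix.of fun i j : {j | AccessM P i₀ j ∧ AccessM P j i₀} => P i.1 j.1) a b)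
        ⟨a, ha⟩ ⟨b, hb⟩ := by
    intro a b h
    induction h with
    | refl => intro _ _; exact Relation.ReflTransGen.refl
    | @tail c d hac hcd ih =>
      intro ha hb
      exact Relation.ReflTransGen.tail (ih ha hcd.2.1) hcd.1
  intro x y
  have hacc : AccessM P x.1 y.1 := Relation.ReflTransGen.trans x.2.2 y.2.1
  exact key (access_in_class P i₀ hacc x.2 y.2) x.2 y.2

lemma extend_subinv (P : Matrix (Fin n) (Fin n) ℝ) (hpos : ∀ i j, 0 ≤ P i j)
    (S : Set (Fin n)) [Fintype ↥S] {w : ↥S → ℝ} (hw0 : ∀ x, 0 ≤ w x)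
    (hsub : ∀ x, w x ≤ (Matrix.of fun a b : S => P a.1 b.1).mulVec w x)
    (w' : Fin n → ℝ) (h1 : ∀ (i : Fin n) (h : i ∈ S), w' i = w ⟨i, h⟩)
    (h2 : ∀ i, i ∉ S → w' i = 0) :
    ∀ i, w' i ≤ P.mulVec w' i := by
  intro i
  rw [mulVec_apply, sum_ext P S w w' h1 h2]
  by_cases h : i ∈ S
  · rw [h1 i h]
    have h3 := hsub ⟨i, h⟩
    rw [mulVec_apply] at h3
    exact h3
  · rw [h2 i h]
    exact Finset.sum_nonneg fun x _ => mul_nonneg (hpos _ _) (hw0 x)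

end StableAux

namespace StableAux
set_option linter.unusedSectionVars false
open scoped Matrix

section Generic
variable {ι : Type*} [Fintype ι] [DecidableEq ι]

lemma exists_subinv (Q : Matrix ι ι ℝ) (hQ : ∀ i j, 0 ≤ Q i j)
    (h : ¬ SpecRad Q < 1) :
    ∃ w : ι → ℝ, (∀ i, 0 ≤ w i) ∧ (∃ i, 0 < w i) ∧ ∀ i, w i ≤ Q.mulVec w i := by
  obtain ⟨μ, v, hμ, hv0, hev⟩ := exists_absEigen_of_not_lt_one Q h
  refine ⟨fun i => ‖v i‖, fun i => norm_nonneg _, ?_, ?_⟩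
  · by_contra hno
    push_neg at hno
    apply hv0
    funext i
    have h1 : ‖v i‖ = 0 := le_antisymm (hno i) (norm_nonneg _)
    exact norm_eq_zero.mp h1
  · intro i
    have h1 : (Q.map (fun a => (a : ℂ))).mulVec v i = μ * v i := by rw [hev]; simp
    calc ‖v i‖ ≤ ‖μ‖ * ‖v i‖ :=
          le_mul_of_one_le_left (norm_nonneg _) hμ
      _ = ‖μ * v i‖ := (norm_mul _ _).symm
      _ = ‖(Q.map (fun a => (a : ℂ))).mulVec v i‖ := by rw [h1]
      _ ≤ ∑ j, Q i j * ‖v j‖ := by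
          rw [mulVec_apply]
          refine (norm_sum_le _ _).trans ?_
          refine Finset.sum_le_sum fun j _ => ?_
          rw [norm_mul, Matrix.map_apply, Complex.norm_real, Real.norm_eq_abs, abs_of_nonneg (hQ i j)]
      _ = Q.mulVec (fun j => ‖v j‖) i := rfl

end Generic

variable {n : ℕ}

lemma class_set_transpose (P : Matrix (Fin n) (Fin n) ℝ) (i₀ : Fin n) :
    {j | AccessM Pᵀ i₀ j ∧ AccessM Pᵀ j i₀} = {j | AccessM P i₀ j ∧ AccessM P j i₀} := by
  ext z
  simp only [Set.mem_setOf_eq, accessM_transpose]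
  exact and_comm

lemma specRadOn_transpose (P : Matrix (Fin n) (Fin n) ℝ) (S : Set (Fin n)) :
    SpecRadOn Pᵀ S = SpecRadOn P S := by
  letI F := Fintype.ofFinite ↥S
  unfold SpecRadOn
  have h : (Matrix.of fun i j : S => Pᵀ i.1 j.1) = (Matrix.of fun i j : S => P i.1 j.1)ᵀ := rfl
  rw [h, specRad_transpose]

lemma exists_pos_subinv_class (P : Matrix (Fin n) (Fin n) ℝ) (hpos : ∀ i j, 0 ≤ P i j)
    (i₀ : Fin n)
    (hcrit : ¬ SpecRadOn P {j | AccessM P i₀ j ∧ AccessM P j i₀} < 1) :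
    ∃ v : Fin n → ℝ, (∀ i, 0 ≤ v i)
      ∧ (∀ c, c ∈ {j | AccessM P i₀ j ∧ AccessM P j i₀} → 0 < v c)
      ∧ (∀ c, c ∉ {j | AccessM P i₀ j ∧ AccessM P j i₀} → v c = 0)
      ∧ (∀ i, v i ≤ P.mulVec v i) := by
  letI F := Fintype.ofFinite ↥{j | AccessM P i₀ j ∧ AccessM P j i₀}
  have hcrit' : ¬ SpecRad (Matrix.of
      fun i j : {j | AccessM P i₀ j ∧ AccessM P j i₀} => P i.1 j.1) < 1 := by
    unfold SpecRadOn at hcrit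
    exact hcrit
  have hQpos : ∀ a b : ↥{j | AccessM P i₀ j ∧ AccessM P j i₀},
      0 ≤ (Matrix.of fun i j : {j | AccessM P i₀ j ∧ AccessM P j i₀} => P i.1 j.1) a b :=
    fun a b => hpos a.1 b.1
  obtain ⟨w, hw0, hwne, hwsub⟩ := exists_subinv _ hQpos hcrit'
  obtain ⟨v0, hv0pos, hv0sub⟩ := positivize _ hQpos (class_conn P i₀) hw0 hwne hwsub
  refine ⟨fun j => if h : j ∈ {j | AccessM P i₀ j ∧ AccessM P j i₀} then v0 ⟨j, h⟩ else 0,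
    ?_, ?_, ?_, ?_⟩
  · intro i; dsimp only; split
    · exact (hv0pos _).le
    · exact le_rfl
  · intro c hc; dsimp only; rw [dif_pos hc]; exact hv0pos _
  · intro c hc; dsimp only; rw [dif_neg hc]
  · exact extend_subinv P hpos _ (fun x => (hv0pos x).le) hv0sub _
      (fun i h => dif_pos h) (fun i h => dif_neg h)

lemma no_chain (P : Matrix (Fin n) (Fin n) ℝ) (hpos : ∀ i j, 0 ≤ P i j) (hstab : MatStable P)
    {g v : Fin n → ℝ} (hg0 : ∀ i, 0 ≤ g i) (hv0 : ∀ i, 0 ≤ v i)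
    (hgsub : ∀ d, g d ≤ Pᵀ.mulVec g d) (hvsub : ∀ i, v i ≤ P.mulVec v i)
    {c d₀ j₂ : Fin n} (hgc : 0 < g c) (hedge : 0 < P c d₀) (hgd : g d₀ = 0)
    (hacc : AccessM P d₀ j₂) (hvj : 0 < v j₂) : False := by
  obtain ⟨b, hb⟩ := access_pow P hpos hacc
  set x : ℕ → Fin n → ℝ := fun k => (P ^ k).mulVec v with hx
  have hxnn : ∀ k i, 0 ≤ x k i := fun k i => mulVec_nonneg (pow_entry_nonneg hpos k) hv0 i
  have hxv : ∀ k i, v i ≤ x k i := fun k i => subinv_pow hpos hvsub k i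
  have hxd : ∀ k, b ≤ k → (P ^ b) d₀ j₂ * v j₂ ≤ x k d₀ := by
    intro k hk
    have hP : P ^ k = P ^ b * P ^ (k - b) := by
      rw [← pow_add]
      congr 1
      omega
    have h1 : x k = (P ^ b).mulVec (x (k - b)) := by
      rw [hx]
      dsimp only
      rw [hP, ← Matrix.mulVec_mulVec]
    rw [h1, mulVec_apply]
    calc (P ^ b) d₀ j₂ * v j₂ ≤ (P ^ b) d₀ j₂ * x (k - b) j₂ :=
          mul_le_mul_of_nonneg_left (hxv _ j₂) (pow_entry_nonneg hpos b d₀ j₂)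
      _ ≤ ∑ m, (P ^ b) d₀ m * x (k - b) m :=
          Finset.single_le_sum (fun m _ => mul_nonneg (pow_entry_nonneg hpos b d₀ m) (hxnn _ m))
            (Finset.mem_univ j₂)
  set s : ℕ → ℝ := fun k => ∑ i, g i * x k i with hs
  have hstep : ∀ k, s k + (P c d₀ * g c) * x k d₀ ≤ s (k + 1) := by
    intro k
    have h2 : x (k + 1) = P.mulVec (x k) := by
      rw [hx]; dsimp only; rw [Matrix.mulVec_mulVec, ← pow_succ']
    have h1 : s (k + 1) = ∑ i, (Pᵀ.mulVec g i) * x k i := by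
      rw [hs]; dsimp only
      rw [h2]
      calc ∑ i, g i * P.mulVec (x k) i = ∑ i, ∑ j, g i * (P i j * x k j) := by
            refine Finset.sum_congr rfl fun i _ => ?_
            rw [mulVec_apply, Finset.mul_sum]
        _ = ∑ j, ∑ i, g i * (P i j * x k j) := Finset.sum_comm
        _ = ∑ j, (∑ i, P i j * g i) * x k j := by
            refine Finset.sum_congr rfl fun j _ => ?_
            rw [Finset.sum_mul]
            refine Finset.sum_congr rfl fun i _ => by ring
        _ = ∑ j, (Pᵀ.mulVec g j) * x k j := by
            refine Finset.sum_congr rfl fun j _ => ?_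
            simp [mulVec_apply, Matrix.transpose_apply]
    have h4 : P c d₀ * g c ≤ Pᵀ.mulVec g d₀ := by
      rw [mulVec_apply]
      have h5 := Finset.single_le_sum (f := fun m => Pᵀ d₀ m * g m)
        (fun m _ => mul_nonneg (hpos m d₀) (hg0 m)) (Finset.mem_univ c)
      simpa [Matrix.transpose_apply, mul_comm] using h5
    have h5 : ((Pᵀ.mulVec g d₀) - g d₀) * x k d₀ ≤
        ∑ i, ((Pᵀ.mulVec g i) - g i) * x k i :=
      Finset.single_le_sum
        (fun i _ => mul_nonneg (sub_nonneg.mpr (hgsub i)) (hxnn k i)) (Finset.mem_univ d₀)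
    have h6 : s (k + 1) = s k + ∑ i, ((Pᵀ.mulVec g i) - g i) * x k i := by
      rw [h1, hs]; dsimp only
      rw [← Finset.sum_add_distrib]
      refine Finset.sum_congr rfl fun i _ => by ring
    have h7 : (P c d₀ * g c) * x k d₀ ≤ ((Pᵀ.mulVec g d₀) - g d₀) * x k d₀ := by
      rw [hgd, sub_zero]
      exact mul_le_mul_of_nonneg_right h4 (hxnn k d₀)
    linarith
  set ε : ℝ := (P c d₀ * g c) * ((P ^ b) d₀ j₂ * v j₂) with hε
  have hε0 : 0 < ε := mul_pos (mul_pos hedge hgc) (mul_pos hb hvj)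
  have hgrow : ∀ m : ℕ, s b + m * ε ≤ s (b + m) := by
    intro m
    induction m with
    | zero => simp
    | succ m ih =>
      have h7 := hstep (b + m)
      have h8 : ε ≤ (P c d₀ * g c) * x (b + m) d₀ :=
        mul_le_mul_of_nonneg_left (hxd (b + m) (by omega))
          (mul_nonneg (hpos c d₀) (hg0 c))
      have h9 : s (b + m + 1) = s (b + (m + 1)) := rfl
      have h10 : s b + (m : ℝ) * ε + ε ≤ s (b + (m + 1)) := by
        rw [← h9]; linarith
      calc s b + ((m : ℕ) + 1 : ℕ) * ε = s b + (m : ℝ) * ε + ε := by push_cast; ring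
        _ ≤ s (b + (m + 1)) := h10
  obtain ⟨cv, hcv⟩ := hstab v
  have hsb : ∀ k, s k ≤ (∑ i, g i) * cv := by
    intro k
    have hxb : ∀ i, x k i ≤ cv := by
      intro i
      have h9 := norm_le_pi_norm (x k) i
      rw [Real.norm_eq_abs] at h9
      exact (le_abs_self _).trans (h9.trans (hcv k))
    calc s k ≤ ∑ i, g i * cv :=
          Finset.sum_le_sum fun i _ => mul_le_mul_of_nonneg_left (hxb i) (hg0 i)
      _ = (∑ i, g i) * cv := (Finset.sum_mul _ _ _).symm
  obtain ⟨m, hm⟩ := exists_nat_gt (((∑ i, g i) * cv - s b) / ε)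
  have h10 := hgrow m
  have h11 := hsb (b + m)
  rw [div_lt_iff₀ hε0] at hm
  linarith

lemma crit_in_supp (P : Matrix (Fin n) (Fin n) ℝ) (hpos : ∀ i j, 0 ≤ P i j)
    (hstab : MatStable P) {w : Fin n → ℝ} (hw0 : ∀ i, 0 ≤ w i) (hne : ∃ i, 0 < w i)
    (hsub : ∀ i, w i ≤ P.mulVec w i) : ∃ i, 0 < w i ∧ i ∈ CriticalNodes P := by
  classical
  have hRtrans : ∀ {a b c : Fin n},
      Relation.ReflTransGen (fun a b => 0 < w a ∧ 0 < w b ∧ 0 < P a b) a b →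
      Relation.ReflTransGen (fun a b => 0 < w a ∧ 0 < w b ∧ 0 < P a b) b c →
      Relation.ReflTransGen (fun a b => 0 < w a ∧ 0 < w b ∧ 0 < P a b) a c :=
    fun h1 h2 => Relation.ReflTransGen.trans h1 h2
  set R : Fin n → Finset (Fin n) := fun a => Finset.univ.filter
    (Relation.ReflTransGen (fun a b => 0 < w a ∧ 0 < w b ∧ 0 < P a b) a) with hRdef
  obtain ⟨i₁, hi₁⟩ := hne
  obtain ⟨istar, histar, hmin⟩ := (Finset.univ.filter (fun i => 0 < w i)).exists_min_image
    (fun i => (R i).card) ⟨i₁, by simp [hi₁]⟩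
  rw [Finset.mem_filter] at histar
  have hwstar : 0 < w istar := histar.2
  have hReachSupp : ∀ {a b : Fin n},
      Relation.ReflTransGen (fun a b => 0 < w a ∧ 0 < w b ∧ 0 < P a b) a b →
      0 < w a → 0 < w b := by
    intro a b h ha
    induction h with
    | refl => exact ha
    | tail h e ih => exact e.2.1
  have hmutual : ∀ b, Relation.ReflTransGen (fun a b => 0 < w a ∧ 0 < w b ∧ 0 < P a b) istar b →
      Relation.ReflTransGen (fun a b => 0 < w a ∧ 0 < w b ∧ 0 < P a b) b istar := by
    intro b hbch
    have hwb : 0 < w b := hReachSupp hbch hwstar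
    have hsubset : R b ⊆ R istar := by
      intro z hz
      rw [hRdef, Finset.mem_filter] at hz ⊢
      exact ⟨Finset.mem_univ z, hRtrans hbch hz.2⟩
    have hcard : (R istar).card ≤ (R b).card := hmin b (by simp [hwb])
    have heq : R b = R istar := Finset.eq_of_subset_of_card_le hsubset hcard
    have histar_mem : istar ∈ R istar := by
      rw [hRdef, Finset.mem_filter]
      exact ⟨Finset.mem_univ istar, Relation.ReflTransGen.refl⟩
    rw [← heq, hRdef, Finset.mem_filter] at histar_mem
    exact histar_mem.2
  have hEacc : ∀ {a b : Fin n},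
      Relation.ReflTransGen (fun a b => 0 < w a ∧ 0 < w b ∧ 0 < P a b) a b → AccessM P a b :=
    fun h => Relation.ReflTransGen.mono (r := fun a b => 0 < w a ∧ 0 < w b ∧ 0 < P a b)
      (p := fun i j => 0 < P i j) (fun x y e => e.2.2) _ _ h
  have hClmem : ∀ b, Relation.ReflTransGen (fun a b => 0 < w a ∧ 0 < w b ∧ 0 < P a b) istar b →
      b ∈ {j | AccessM P istar j ∧ AccessM P j istar} := fun b hb =>
    ⟨hEacc hb, hEacc (hmutual b hb)⟩
  letI F := Fintype.ofFinite ↥{j | AccessM P istar j ∧ AccessM P j istar}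
  set Q : Matrix ↥{j | AccessM P istar j ∧ AccessM P j istar}
      ↥{j | AccessM P istar j ∧ AccessM P j istar} ℝ :=
    Matrix.of fun a b : {j | AccessM P istar j ∧ AccessM P j istar} => P a.1 b.1 with hQQ
  have hQpos : ∀ a b, 0 ≤ Q a b := fun a b => hpos a.1 b.1
  set u : ↥{j | AccessM P istar j ∧ AccessM P j istar} → ℝ := fun b =>
    if Relation.ReflTransGen (fun a b => 0 < w a ∧ 0 < w b ∧ 0 < P a b) istar b.1
    then w b.1 else 0 with hu
  have hu0 : ∀ b, 0 ≤ u b := by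
    intro b; rw [hu]; dsimp only; split
    · exact hw0 _
    · exact le_rfl
  have husub : ∀ b, u b ≤ Q.mulVec u b := by
    intro b
    rw [hu]; dsimp only
    by_cases hbr : Relation.ReflTransGen (fun a b => 0 < w a ∧ 0 < w b ∧ 0 < P a b) istar b.1
    · rw [if_pos hbr]
      set wF : Fin n → ℝ := fun j =>
        if Relation.ReflTransGen (fun a b => 0 < w a ∧ 0 < w b ∧ 0 < P a b) istar j
        then w j else 0 with hwF
      have hterm : ∀ j, P b.1 j * w j = P b.1 j * wF j := by
        intro j
        rw [hwF]; dsimp only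
        by_cases hr : Relation.ReflTransGen (fun a b => 0 < w a ∧ 0 < w b ∧ 0 < P a b) istar j
        · rw [if_pos hr]
        · rw [if_neg hr]
          have h0 : P b.1 j * w j = 0 := by
            rcases (hw0 j).eq_or_lt with h | hwj
            · rw [← h, mul_zero]
            · rcases (hpos b.1 j).eq_or_lt with h | hPj
              · rw [← h, zero_mul]
              · exact absurd (hRtrans hbr (Relation.ReflTransGen.single
                  ⟨hReachSupp hbr hwstar, hwj, hPj⟩)) hr
          rw [h0, mul_zero]
      have hwF1 : ∀ (i : Fin n) (h : i ∈ {j | AccessM P istar j ∧ AccessM P j istar}),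
          wF i = u ⟨i, h⟩ := by
        intro i h
        rw [hwF, hu]
      have hwF2 : ∀ i, i ∉ {j | AccessM P istar j ∧ AccessM P j istar} → wF i = 0 := by
        intro i h
        rw [hwF]; dsimp only
        rw [if_neg (fun hr => h (hClmem i hr))]
      calc w b.1 ≤ P.mulVec w b.1 := hsub b.1
        _ = ∑ j, P b.1 j * wF j := by
            rw [mulVec_apply]; exact Finset.sum_congr rfl fun j _ => hterm j
        _ = ∑ x : ↥{j | AccessM P istar j ∧ AccessM P j istar}, P b.1 x.1 * u x :=
            sum_ext P _ u wF hwF1 hwF2 b.1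
        _ = Q.mulVec u b := rfl
    · rw [if_neg hbr]
      exact mulVec_nonneg hQpos hu0 b
  have histarCl : istar ∈ {j | AccessM P istar j ∧ AccessM P j istar} :=
    ⟨Relation.ReflTransGen.refl, Relation.ReflTransGen.refl⟩
  have hustar : 0 < u ⟨istar, histarCl⟩ := by
    rw [hu]; dsimp only; rw [if_pos Relation.ReflTransGen.refl]; exact hwstar
  have h1 : 1 ≤ SpecRad Q := one_le_specRad_of_subinv Q hQpos hu0 husub hustar
  have h2 : SpecRad Q ≤ 1 := specRad_sub_le_one P hpos hstab _
  have hcrit : SpecRadOn P {j | AccessM P istar j ∧ AccessM P j istar} = 1 := by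
    unfold SpecRadOn
    exact le_antisymm h2 h1
  exact ⟨istar, hwstar, ⟨{j | AccessM P istar j ∧ AccessM P j istar},
    ⟨⟨istar, rfl⟩, hcrit⟩, histarCl⟩⟩

end StableAux


/-- normal-form partition of a nonnegative stable matrix: the upstream,
critical, downstream and independent node sets are pairwise disjoint and the spectral
radii of the principal submatrices on U, D and I are strictly less than one. -/
theorem stmt8 {n : ℕ} (P : Matrix (Fin n) (Fin n) ℝ)
    (hpos : ∀ i j, 0 ≤ P i j) (hstab : MatStable P) :
    let C : Set (Fin n) := CriticalNodes P
    let D : Set (Fin n) := {i | i ∉ C ∧ ∃ j ∈ C, AccessM P j i}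
    let U : Set (Fin n) := {i | i ∉ C ∧ ∃ j ∈ C, AccessM P i j}
    let I : Set (Fin n) := {i | i ∉ C ∧ i ∉ D ∧ i ∉ U}
    (U ∩ C = ∅ ∧ U ∩ D = ∅ ∧ U ∩ I = ∅ ∧ C ∩ D = ∅ ∧ C ∩ I = ∅ ∧ D ∩ I = ∅) ∧
    SpecRadOn P U < 1 ∧ SpecRadOn P D < 1 ∧ SpecRadOn P I < 1 := by
  intro C D U I
  have hmain : ∀ (S : Set (Fin n)), (∀ i, i ∈ S → i ∉ C) → SpecRadOn P S < 1 := by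
    intro S hS
    by_contra hcon
    letI F := Fintype.ofFinite ↥S
    have hQpos : ∀ a b : ↥S, 0 ≤ (Matrix.of fun i j : S => P i.1 j.1) a b :=
      fun a b => hpos a.1 b.1
    have hcon' : ¬ SpecRad (Matrix.of fun i j : S => P i.1 j.1) < 1 := by
      unfold SpecRadOn at hcon
      exact hcon
    obtain ⟨w, hw0, hwne, hwsub⟩ := StableAux.exists_subinv _ hQpos hcon'
    classical
    set w' : Fin n → ℝ := fun j => if h : j ∈ S then w ⟨j, h⟩ else 0 with hw'
    have hext := StableAux.extend_subinv P hpos S hw0 hwsub w'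
      (fun i h => by rw [hw']; dsimp only; rw [dif_pos h])
      (fun i h => by rw [hw']; dsimp only; rw [dif_neg h])
    have hw'0 : ∀ i, 0 ≤ w' i := by
      intro i
      rw [hw']; dsimp only; split
      · exact hw0 _
      · exact le_rfl
    obtain ⟨x0, hx0⟩ := hwne
    have hne' : ∃ i, 0 < w' i := by
      refine ⟨x0.1, ?_⟩
      rw [hw']; dsimp only; rw [dif_pos x0.2]
      exact hx0
    obtain ⟨i, hwi, hiC⟩ := StableAux.crit_in_supp P hpos hstab hw'0 hne' hext
    have hiS : i ∈ S := by
      by_contra hiS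
      rw [hw'] at hwi
      dsimp only at hwi
      rw [dif_neg hiS] at hwi
      exact lt_irrefl 0 hwi
    exact hS i hiS hiC
  refine ⟨⟨?_, ?_, ?_, ?_, ?_, ?_⟩, hmain U (fun i hi => hi.1), hmain D (fun i hi => hi.1),
    hmain I (fun i hi => hi.1)⟩
  · rw [Set.eq_empty_iff_forall_notMem]
    rintro i ⟨hU, hC⟩
    exact hU.1 hC
  · -- the hard one : U ∩ D = ∅
    rw [Set.eq_empty_iff_forall_notMem]
    rintro i ⟨⟨hiC, j, hjC, hij⟩, ⟨-, j', hj'C, hj'i⟩⟩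
    obtain ⟨C₂, ⟨⟨p₂, hp₂⟩, hcrit₂⟩, hjC₂⟩ := hjC
    obtain ⟨C₁, ⟨⟨p₁, hp₁⟩, hcrit₁⟩, hj'C₁⟩ := hj'C
    have hiC₁ : i ∉ C₁ := fun hiC₁ => hiC ⟨C₁, ⟨⟨p₁, hp₁⟩, hcrit₁⟩, hiC₁⟩
    obtain ⟨c, hcC₁, d₀, hd₀, hedge, hacc⟩ := StableAux.exists_exit P hj'i hj'C₁ hiC₁
    have hcrit₂' : ¬ SpecRadOn P {z | AccessM P p₂ z ∧ AccessM P z p₂} < 1 := by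
      rw [← hp₂, hcrit₂]
      exact lt_irrefl 1
    obtain ⟨v, hv0, hvpos, hvzero, hvsub⟩ :=
      StableAux.exists_pos_subinv_class P hpos p₂ hcrit₂'
    have hposT : ∀ a b, 0 ≤ P.transpose a b := fun a b => hpos b a
    have hsetT := StableAux.class_set_transpose P p₁
    have hcrit₁' : ¬ SpecRadOn P.transpose {z | AccessM P.transpose p₁ z ∧ AccessM P.transpose z p₁} < 1 := by
      rw [hsetT, StableAux.specRadOn_transpose, ← hp₁, hcrit₁]
      exact lt_irrefl 1
    obtain ⟨g, hg0, hgpos, hgzero, hgsub⟩ :=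
      StableAux.exists_pos_subinv_class P.transpose hposT p₁ hcrit₁'
    have hgsub' : ∀ d, g d ≤ P.transpose.mulVec g d := hgsub
    refine StableAux.no_chain P hpos hstab hg0 hv0 hgsub' hvsub
      (c := c) (d₀ := d₀) (j₂ := j) ?_ hedge ?_
      (Relation.ReflTransGen.trans hacc hij) ?_
    · apply hgpos
      rw [hsetT, ← hp₁]
      exact hcC₁
    · apply hgzero
      rw [hsetT, ← hp₁]
      exact hd₀
    · apply hvpos
      rw [← hp₂]
      exact hjC₂
  · rw [Set.eq_empty_iff_forall_notMem]
    rintro i ⟨hU, hI⟩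
    exact hI.2.2 hU
  · rw [Set.eq_empty_iff_forall_notMem]
    rintro i ⟨hC, hD⟩
    exact hD.1 hC
  · rw [Set.eq_empty_iff_forall_notMem]
    rintro i ⟨hC, hI⟩
    exact hI.1 hC
  · rw [Set.eq_empty_iff_forall_notMem]
    rintro i ⟨hD, hI⟩
    exact hI.2.1 hD
end
end

section
/- Let P be a nonnegative stable n×n matrix with critical node set C and downstream node set D (nodes outside C accessible from C). If z ∈ ℝ^n satisfies Pz ≤ z, then P_{CC} z_C = z_C and z_D = 0. -/
noncomputable section
open Filter Topology Set
open scoped Classical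

set_option linter.unusedSectionVars false
namespace Stmt9Aux

variable {ι : Type*} [Fintype ι] [DecidableEq ι]

lemma pow_entry_nonneg (A : Matrix ι ι ℝ) (h : ∀ i j, 0 ≤ A i j) :
    ∀ k i j, 0 ≤ (A ^ k) i j := by
  intro k
  induction k with
  | zero => intro i j; simp [Matrix.one_apply]; positivity
  | succ k ih =>
    intro i j
    rw [pow_succ, Matrix.mul_apply]
    exact Finset.sum_nonneg fun l _ => mul_nonneg (ih i l) (h l j)

lemma mulVec_nonneg (A : Matrix ι ι ℝ) (h : ∀ i j, 0 ≤ A i j) {x : ι → ℝ}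
    (hx : ∀ i, 0 ≤ x i) : ∀ i, 0 ≤ A.mulVec x i := by
  intro i
  exact Finset.sum_nonneg fun l _ => mul_nonneg (h i l) (hx l)

lemma mulVec_mono (A : Matrix ι ι ℝ) (h : ∀ i j, 0 ≤ A i j) {x y : ι → ℝ}
    (hxy : x ≤ y) : A.mulVec x ≤ A.mulVec y := by
  intro i
  exact Finset.sum_le_sum fun l _ => mul_le_mul_of_nonneg_left (hxy l) (h i l)

/-- entrywise monotone powers -/
lemma pow_entry_mono (A B : Matrix ι ι ℝ) (hA : ∀ i j, 0 ≤ A i j)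
    (hAB : ∀ i j, A i j ≤ B i j) : ∀ k i j, (A ^ k) i j ≤ (B ^ k) i j := by
  intro k
  induction k with
  | zero => intro i j; simp
  | succ k ih =>
    intro i j
    rw [pow_succ, pow_succ, Matrix.mul_apply, Matrix.mul_apply]
    refine Finset.sum_le_sum fun l _ => ?_
    have h1 : 0 ≤ (A ^ k) i l := pow_entry_nonneg A hA k i l
    have hB : 0 ≤ B l j := le_trans (hA l j) (hAB l j)
    calc (A ^ k) i l * A l j ≤ (A ^ k) i l * B l j := mul_le_mul_of_nonneg_left (hAB l j) h1
    _ ≤ (B ^ k) i l * B l j := mul_le_mul_of_nonneg_right (ih i l) hB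

/-- telescoping sum -/
lemma telescope (A : Matrix ι ι ℝ) (x : ι → ℝ) (k : ℕ) :
    (∑ m ∈ Finset.range k, (A ^ m).mulVec (x - A.mulVec x)) = x - (A ^ k).mulVec x := by
  induction k with
  | zero => simp
  | succ k ih =>
    rw [Finset.sum_range_succ, ih]
    funext i
    simp only [Pi.sub_apply, Pi.add_apply, Matrix.mulVec_sub, Matrix.mulVec_mulVec, ← pow_succ]
    ring


/-- coordinates of iterates are bounded -/
lemma coord_bound (A : Matrix ι ι ℝ) (hstab : ∀ x : ι → ℝ, ∃ c : ℝ, ∀ k : ℕ, ‖(A ^ k).mulVec x‖ ≤ c)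
    (x : ι → ℝ) : ∃ c : ℝ, ∀ k i, |((A ^ k).mulVec x) i| ≤ c := by
  obtain ⟨c, hc⟩ := hstab x
  refine ⟨c, fun k i => ?_⟩
  have := norm_le_pi_norm ((A ^ k).mulVec x) i
  simpa [Real.norm_eq_abs] using le_trans this (hc k)

/-- access gives a positive power entry -/
lemma access_pos_pow {n : ℕ} (P : Matrix (Fin n) (Fin n) ℝ) (hpos : ∀ i j, 0 ≤ P i j)
    {j i : Fin n} (h : Relation.ReflTransGen (fun a b => 0 < P a b) j i) :
    ∃ r, 0 < (P ^ r) j i := by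
  induction h with
  | refl => exact ⟨0, by simp [Matrix.one_apply]⟩
  | @tail p q hjp hpq ih =>
    obtain ⟨r, hr⟩ := ih
    refine ⟨r + 1, ?_⟩
    rw [pow_succ, Matrix.mul_apply]
    have : 0 < (P ^ r) j p * P p q := mul_pos hr hpq
    refine lt_of_lt_of_le this ?_
    refine Finset.single_le_sum (f := fun l => (P ^ r) j l * P l q) ?_ (Finset.mem_univ p)
    exact fun l _ => mul_nonneg (pow_entry_nonneg P hpos r j l) (hpos l q)


/-- restriction of a matrix to a node set, padded with zeros -/
noncomputable def restr {n : ℕ} (P : Matrix (Fin n) (Fin n) ℝ) (C : Set (Fin n)) : Matrix (Fin n) (Fin n) ℝ :=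
  Matrix.of fun i j => if i ∈ C ∧ j ∈ C then P i j else 0

lemma restr_nonneg {n : ℕ} (P : Matrix (Fin n) (Fin n) ℝ) (C : Set (Fin n))
    (hpos : ∀ i j, 0 ≤ P i j) : ∀ i j, 0 ≤ restr P C i j := by
  intro i j; unfold restr; dsimp; split <;> simp [hpos]

lemma restr_le {n : ℕ} (P : Matrix (Fin n) (Fin n) ℝ) (C : Set (Fin n))
    (hpos : ∀ i j, 0 ≤ P i j) : ∀ i j, restr P C i j ≤ P i j := by
  intro i j; unfold restr; dsimp; split <;> simp [hpos]

lemma class_access {n : ℕ} {P : Matrix (Fin n) (Fin n) ℝ} {C : Set (Fin n)}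
    (hC : ∃ i0, C = {j | Relation.ReflTransGen (fun a b => 0 < P a b) i0 j ∧
      Relation.ReflTransGen (fun a b => 0 < P a b) j i0})
    {a b : Fin n} (ha : a ∈ C) (hb : b ∈ C) :
    Relation.ReflTransGen (fun a b => 0 < P a b) a b := by
  obtain ⟨i0, rfl⟩ := hC
  exact ha.2.trans hb.1

lemma class_path_pos {n : ℕ} {P : Matrix (Fin n) (Fin n) ℝ} (hpos : ∀ i j, 0 ≤ P i j)
    {C : Set (Fin n)}
    (hC : ∃ i0, C = {j | Relation.ReflTransGen (fun a b => 0 < P a b) i0 j ∧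
      Relation.ReflTransGen (fun a b => 0 < P a b) j i0})
    {a b : Fin n} (ha : a ∈ C) (hb : b ∈ C) :
    ∃ m, 0 < ((restr P C) ^ m) a b := by
  have hacc := class_access hC ha hb
  have key : ∀ c, Relation.ReflTransGen (fun a b => 0 < P a b) a c → c ∈ C →
      ∃ m, 0 < ((restr P C) ^ m) a c := by
    intro c hc
    induction hc with
    | refl => intro _; exact ⟨0, by simp [Matrix.one_apply]⟩
    | @tail p q hap hpq ih =>
      intro hq
      have hp : p ∈ C := by
        obtain ⟨i0, rfl⟩ := hC
        constructor
        · exact ha.1.trans hap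
        · exact (Relation.ReflTransGen.single (r := fun a b => 0 < P a b) hpq).trans hq.2
      obtain ⟨m, hm⟩ := ih hp
      refine ⟨m + 1, ?_⟩
      rw [pow_succ, Matrix.mul_apply]
      have hQ : 0 < restr P C p q := by
        unfold restr; simp only [Matrix.of_apply, hp, hq, and_self, if_true]; exact hpq
      have : 0 < ((restr P C) ^ m) a p * restr P C p q := mul_pos hm hQ
      refine lt_of_lt_of_le this ?_
      refine Finset.single_le_sum (f := fun l => ((restr P C) ^ m) a l * restr P C l q) ?_
        (Finset.mem_univ p)
      exact fun l _ => mul_nonneg (pow_entry_nonneg _ (restr_nonneg P C hpos) m a l)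
        (restr_nonneg P C hpos l q)
  exact key b hacc hb

section Spec

/-- entries of powers of the subtype submatrix agree with entries of powers of the
padded restriction -/
lemma subQ_pow_eq {n : ℕ} (P : Matrix (Fin n) (Fin n) ℝ) (C : Set (Fin n))
    [Fintype C] [DecidableEq C] :
    ∀ (k : ℕ) (a b : C),
      ((Matrix.of fun i j : C => P i.1 j.1) ^ k) a b = ((restr P C) ^ k) a.1 b.1 := by
  intro k
  induction k with
  | zero =>
    intro a b
    by_cases hab : a = b
    · subst hab; simp [Matrix.one_apply]
    · have : a.1 ≠ b.1 := fun h => hab (Subtype.ext h)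
      simp [Matrix.one_apply, hab, this]
  | succ k ih =>
    intro a b
    rw [pow_succ, pow_succ, Matrix.mul_apply, Matrix.mul_apply]
    have hzero : ∀ l ∈ Finset.univ.filter (fun l : Fin n => ¬ l ∈ C),
        ((restr P C) ^ k) a.1 l * restr P C l b.1 = 0 := by
      intro l hl
      simp only [Finset.mem_filter] at hl
      have : restr P C l b.1 = 0 := by
        unfold restr; simp [hl.2]
      rw [this, mul_zero]
    have hsplit : (∑ l : Fin n, ((restr P C) ^ k) a.1 l * restr P C l b.1)
        = ∑ l ∈ Finset.univ.filter (fun l : Fin n => l ∈ C),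
          ((restr P C) ^ k) a.1 l * restr P C l b.1 := by
      rw [← Finset.sum_filter_add_sum_filter_not Finset.univ (fun l : Fin n => l ∈ C)]
      rw [Finset.sum_eq_zero hzero, add_zero]
    rw [hsplit]
    rw [Finset.sum_subtype (p := fun l : Fin n => l ∈ C)
      (Finset.univ.filter (fun l : Fin n => l ∈ C)) (by simp)
      (fun l => ((restr P C) ^ k) a.1 l * restr P C l b.1)]
    refine Finset.sum_congr rfl fun l _ => ?_
    rw [ih a l]
    congr 1
    unfold restr
    simp [l.2, b.2]

/-- the key spectral bound: if the padded restriction has uniformly geometrically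
decaying powers along multiples of `K`, then `SpecRadOn P C < 1`. -/
lemma specRadOn_ne_one {n : ℕ} (P : Matrix (Fin n) (Fin n) ℝ) (C : Set (Fin n))
    (hpos : ∀ i j, 0 ≤ P i j) (K : ℕ) (hK : 1 ≤ K) (c θ : ℝ) (hc : 0 ≤ c) (hθ0 : 0 ≤ θ) (hθ1 : θ < 1)
    (hbound : ∀ (m : ℕ) (a b : Fin n), a ∈ C → b ∈ C →
      ((restr P C) ^ (K * m)) a b ≤ c * θ ^ m) :
    SpecRadOn P C ≠ 1 := by
  unfold SpecRadOn SpecRad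
  letI : Fintype C := Fintype.ofFinite _
  letI : DecidableEq C := Classical.decEq _
  set Q : Matrix C C ℝ := Matrix.of fun i j : C => P i.1 j.1 with hQ
  set Mc : Matrix C C ℂ := Q.map (fun a => (a : ℂ)) with hMc
  set ρ : ℝ := θ ^ ((K : ℝ)⁻¹) with hρ
  have hρ1 : ρ < 1 := by
    apply Real.rpow_lt_one hθ0 hθ1
    positivity
  have hQnn : ∀ i j, 0 ≤ Q i j := fun i j => hpos i.1 j.1
  -- powers of Mc are the complexification of powers of Q
  have hmapPow : ∀ k : ℕ, Mc ^ k = (Q ^ k).map (fun a => (a : ℂ)) := by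
    intro k
    induction k with
    | zero =>
      simp only [pow_zero]
      exact (Matrix.map_one _ (by simp) (by simp)).symm
    | succ k ih =>
      rw [pow_succ, pow_succ, ih]
      ext a b
      simp [Matrix.mul_apply, hMc, Matrix.map_apply]
    -- end
  -- every spectral value has modulus at most ρ
  have key : ∀ μ : ℂ, μ ∈ spectrum ℂ Mc → ‖μ‖ ≤ ρ := by
    intro μ hμ
    rw [spectrum.mem_iff] at hμ
    rw [Matrix.isUnit_iff_isUnit_det, isUnit_iff_ne_zero, not_ne_iff] at hμ
    obtain ⟨v, hv0, hv⟩ := (Matrix.exists_mulVec_eq_zero_iff).2 hμ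
    have heig : Mc.mulVec v = μ • v := by
      have h1 : (algebraMap ℂ (Matrix C C ℂ) μ).mulVec v = μ • v := by
        rw [Matrix.algebraMap_eq_diagonal]
        funext i
        simp [Matrix.mulVec_diagonal]
      rw [Matrix.sub_mulVec, h1, sub_eq_zero] at hv
      exact hv.symm
    have heigk : ∀ k : ℕ, (Mc ^ k).mulVec v = (μ ^ k) • v := by
      intro k
      induction k with
      | zero => simp [Matrix.one_mulVec]
      | succ k ih =>
        rw [pow_succ, ← Matrix.mulVec_mulVec, heig, Matrix.mulVec_smul, ih, smul_smul,
          mul_comm μ (μ ^ k), ← pow_succ]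
    -- pick a coordinate with maximal modulus
    obtain ⟨a0, hva0⟩ : ∃ a : C, v a ≠ 0 := by
      by_contra h
      push_neg at h
      exact hv0 (funext fun a => h a)
    obtain ⟨a, _, ha⟩ := Finset.exists_max_image Finset.univ (fun b : C => ‖v b‖)
      ⟨a0, Finset.mem_univ a0⟩
    have hva : 0 < ‖v a‖ :=
      lt_of_lt_of_le (by simpa using hva0) (ha a0 (Finset.mem_univ a0))
    -- the main estimate
    have hEst : ∀ m : ℕ, ‖μ‖ ^ (K * m) ≤ (Fintype.card C * c) * θ ^ m := by
      intro m
      have h1 : ((Mc ^ (K * m)).mulVec v) a = (μ ^ (K * m)) • v a := by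
        rw [heigk (K * m)]; rfl
      have h2 : ‖(μ ^ (K * m)) • v a‖
          = ‖μ‖ ^ (K * m) * ‖v a‖ := by
        simp [smul_eq_mul, map_mul, map_pow]
      have h3 : ‖((Mc ^ (K * m)).mulVec v) a‖
          ≤ (Fintype.card C * c) * θ ^ m * ‖v a‖ := by
        rw [hmapPow]
        have : ((Q ^ (K * m)).map (fun a => (a : ℂ))).mulVec v a
            = ∑ b : C, ((Q ^ (K * m)) a b : ℂ) * v b := by
          simp [Matrix.mulVec, Matrix.map_apply, dotProduct]
        rw [this]
        refine le_trans (norm_sum_le _ _) ?_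
        have hterm : ∀ b : C, ‖((Q ^ (K * m)) a b : ℂ) * v b‖
            ≤ (c * θ ^ m) * ‖v a‖ := by
          intro b
          rw [norm_mul, Complex.norm_real, Real.norm_eq_abs,
            abs_of_nonneg (pow_entry_nonneg Q hQnn (K * m) a b)]
          have hb1 : (Q ^ (K * m)) a b ≤ c * θ ^ m := by
            rw [subQ_pow_eq P C (K * m) a b]
            exact hbound m a.1 b.1 a.2 b.2
          have hb2 : ‖v b‖ ≤ ‖v a‖ := ha b (Finset.mem_univ b)
          exact mul_le_mul hb1 hb2 (norm_nonneg _)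
            (by positivity)
        refine le_trans (Finset.sum_le_sum fun b _ => hterm b) ?_
        rw [Finset.sum_const, Finset.card_univ, nsmul_eq_mul]
        ring_nf
        exact le_refl _
      rw [h1, h2] at h3
      exact le_of_mul_le_mul_right (by linarith [h3]) hva
    -- conclude |μ|^K ≤ θ
    set x : ℝ := ‖μ‖ ^ K with hx
    have hxnn : 0 ≤ x := by positivity
    have hxm : ∀ m : ℕ, x ^ m ≤ (Fintype.card C * c) * θ ^ m := by
      intro m
      rw [hx, ← pow_mul]
      exact hEst m
    have hxθ : x ≤ θ := by
      by_contra hlt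
      push_neg at hlt
      rcases eq_or_lt_of_le hθ0 with hθz | hθp
      · have := hxm 1
        rw [← hθz] at this
        simp at this
        nlinarith
      · have h1 : 1 < x / θ := (one_lt_div hθp).2 hlt
        obtain ⟨m, hm⟩ := pow_unbounded_of_one_lt (Fintype.card C * c) h1
        have h2 : (x / θ) ^ m ≤ (Fintype.card C * c) := by
          rw [div_pow, div_le_iff₀ (by positivity)]
          exact hxm m
        linarith
    -- conclude |μ| ≤ ρ
    have : ‖μ‖ = (x) ^ ((K : ℝ)⁻¹) := by
      rw [hx, ← Real.rpow_natCast ‖μ‖ K, ← Real.rpow_mul (by positivity)]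
      rw [mul_inv_cancel₀ (by positivity), Real.rpow_one]
    rw [this, hρ]
    exact Real.rpow_le_rpow hxnn hxθ (by positivity)
  -- now bound the sSup
  intro hcon
  set S : Set ℝ := {r : ℝ | ∃ μ : ℂ, μ ∈ spectrum ℂ Mc ∧ r = ‖μ‖} with hS
  have hsup : sSup S < 1 := by
    rcases Set.eq_empty_or_nonempty S with hemp | hne
    · rw [hemp, Real.sSup_empty]; norm_num
    · refine lt_of_le_of_lt (csSup_le hne ?_) hρ1
      rintro r ⟨μ, hμ, rfl⟩
      exact key μ hμ
  rw [hcon] at hsup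
  exact lt_irrefl 1 hsup

end Spec


section LB

/-- If `C` is a critical class and the partial sums `∑_{m<k} (P|_C)^m G` of a
nonnegative vector `G` supported on `C` are bounded, then `G = 0`. -/
lemma crit_bounded_partial_sums_zero {n : ℕ} (P : Matrix (Fin n) (Fin n) ℝ)
    (hpos : ∀ i j, 0 ≤ P i j) {C : Set (Fin n)}
    (hclass : ∃ i0, C = {j | Relation.ReflTransGen (fun a b => 0 < P a b) i0 j ∧
      Relation.ReflTransGen (fun a b => 0 < P a b) j i0})
    (hcrit : SpecRadOn P C = 1)
    (G : Fin n → ℝ) (hG0 : ∀ i, 0 ≤ G i) (hGsupp : ∀ i, i ∉ C → G i = 0)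
    (L : ℝ) (hL : ∀ k i, (∑ m ∈ Finset.range k, ((restr P C) ^ m).mulVec G) i ≤ L) :
    ∀ i, G i = 0 := by
  set Q : Matrix (Fin n) (Fin n) ℝ := restr P C with hQdef
  have hQnn : ∀ i j, 0 ≤ Q i j := restr_nonneg P C hpos
  by_contra hcon
  push_neg at hcon
  obtain ⟨j0, hj0⟩ := hcon
  have hj0pos : 0 < G j0 := lt_of_le_of_ne (hG0 j0) (Ne.symm hj0)
  have hj0C : j0 ∈ C := by
    by_contra h
    exact hj0 (hGsupp j0 h)
  set T : ℕ → Fin n → ℝ := fun k => ∑ m ∈ Finset.range k, (Q ^ m).mulVec G with hTdef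
  have hTnn : ∀ k i, 0 ≤ T k i := by
    intro k i
    have : ∀ m ∈ Finset.range k, 0 ≤ ((Q ^ m).mulVec G) i :=
      fun m _ => mulVec_nonneg _ (pow_entry_nonneg Q hQnn m) hG0 i
    simpa [hTdef] using Finset.sum_nonneg this
  have hTmono : ∀ i, Monotone fun k => T k i := by
    intro i
    apply monotone_nat_of_le_succ
    intro k
    have h0 : 0 ≤ ((Q ^ k).mulVec G) i := mulVec_nonneg _ (pow_entry_nonneg Q hQnn k) hG0 i
    simp only [hTdef, Finset.sum_range_succ]
    simp only [Pi.add_apply, Finset.sum_apply]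
    linarith [h0]
  have hbdd : ∀ i, BddAbove (Set.range fun k => T k i) := by
    intro i
    exact ⟨L, by rintro x ⟨k, rfl⟩; exact hL k i⟩
  set S : Fin n → ℝ := fun i => ⨆ k, T k i with hSdef
  have hTS : ∀ i, Tendsto (fun k => T k i) atTop (𝓝 (S i)) :=
    fun i => tendsto_atTop_ciSup (hTmono i) (hbdd i)
  have hTleS : ∀ k i, T k i ≤ S i := fun k i => le_ciSup (hbdd i) k
  have hSnn : ∀ i, 0 ≤ S i := fun i => le_trans (hTnn 0 i) (hTleS 0 i)
  -- recursion for T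
  have hTrec : ∀ k i, T (k + 1) i = G i + ∑ j, Q i j * T k j := by
    intro k i
    have e1 : T (k + 1) i = ∑ m ∈ Finset.range k, ((Q ^ (m + 1)).mulVec G) i
        + ((Q ^ 0).mulVec G) i := by
      simp only [hTdef, Finset.sum_range_succ', Finset.sum_apply, Pi.add_apply]
    have e2 : ∀ m : ℕ, ((Q ^ (m + 1)).mulVec G) i = ∑ j, Q i j * ((Q ^ m).mulVec G) j := by
      intro m
      rw [pow_succ', ← Matrix.mulVec_mulVec]
      simp [Matrix.mulVec, dotProduct]
    have e3 : ((Q ^ 0).mulVec G) i = G i := by simp [Matrix.one_mulVec]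
    rw [e1, e3]
    rw [Finset.sum_congr rfl fun m _ => e2 m, Finset.sum_comm, add_comm]
    congr 1
    refine Finset.sum_congr rfl fun j _ => ?_
    rw [← Finset.mul_sum]
    congr 1
    simp [hTdef, Finset.sum_apply]
  -- fixed point equation for S
  have hSfix : ∀ i, S i = G i + ∑ j, Q i j * S j := by
    intro i
    have l1 : Tendsto (fun k => T (k + 1) i) atTop (𝓝 (S i)) :=
      (hTS i).comp (tendsto_add_atTop_nat 1)
    have l2 : Tendsto (fun k => G i + ∑ j, Q i j * T k j) atTop
        (𝓝 (G i + ∑ j, Q i j * S j)) := by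
      apply Tendsto.const_add
      exact tendsto_finset_sum _ fun j _ => (hTS j).const_mul _
    have : (fun k => T (k + 1) i) = fun k => G i + ∑ j, Q i j * T k j :=
      funext fun k => hTrec k i
    rw [this] at l1
    exact tendsto_nhds_unique l1 l2
  have hQS : Q.mulVec S = S - G := by
    funext i
    have := hSfix i
    simp only [Matrix.mulVec, dotProduct, Pi.sub_apply]
    linarith [this]
  -- iterated: (Q^k) S = S - T k
  have hQSk : ∀ k, (Q ^ k).mulVec S = S - T k := by
    intro k
    induction k with
    | zero => simp [hTdef, Matrix.one_mulVec]
    | succ k ih =>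
      rw [pow_succ', ← Matrix.mulVec_mulVec, ih]
      rw [Matrix.mulVec_sub, hQS]
      funext i
      have e2 : (Q.mulVec (T k)) i = ∑ j, Q i j * T k j := by
        simp [Matrix.mulVec, dotProduct]
      simp only [Pi.sub_apply, e2, hTrec k i]
      ring
  -- S vanishes off C, positive on C
  have hTzero : ∀ k i, i ∉ C → T k i = 0 := by
    intro k i hiC
    have hz : ∀ m, ((Q ^ m).mulVec G) i = 0 := by
      intro m
      cases m with
      | zero => simp [Matrix.one_mulVec, hGsupp i hiC]
      | succ m =>
        rw [pow_succ', ← Matrix.mulVec_mulVec]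
        have : ∀ j, Q i j = 0 := by
          intro j
          simp only [hQdef]
          unfold restr
          simp [hiC]
        simp [Matrix.mulVec, dotProduct, this]
    simp only [hTdef, Finset.sum_apply]
    exact Finset.sum_eq_zero fun m _ => hz m
  have hSzero : ∀ i, i ∉ C → S i = 0 := by
    intro i hiC
    have : (fun k => T k i) = fun _ => 0 := funext fun k => hTzero k i hiC
    simp [hSdef, this]
  have hSposC : ∀ i, i ∈ C → 0 < S i := by
    intro i hiC
    obtain ⟨m, hm⟩ := class_path_pos hpos hclass hiC hj0C
    have h1 : ((Q ^ m).mulVec G) i ≥ (Q ^ m) i j0 * G j0 := by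
      have : ((Q ^ m).mulVec G) i = ∑ l, (Q ^ m) i l * G l := by
        simp [Matrix.mulVec, dotProduct]
      rw [this]
      refine Finset.single_le_sum (f := fun l => (Q ^ m) i l * G l) ?_ (Finset.mem_univ j0)
      exact fun l _ => mul_nonneg (pow_entry_nonneg Q hQnn m i l) (hG0 l)
    have h2 : 0 < ((Q ^ m).mulVec G) i := lt_of_lt_of_le (mul_pos hm hj0pos) h1
    have h3 : ((Q ^ m).mulVec G) i ≤ T (m + 1) i := by
      simp only [hTdef, Finset.sum_range_succ, Finset.sum_apply, Pi.add_apply]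
      have : 0 ≤ ∑ m' ∈ Finset.range m, ((Q ^ m').mulVec G) i := by
        apply Finset.sum_nonneg
        exact fun m' _ => mulVec_nonneg _ (pow_entry_nonneg Q hQnn m') hG0 i
      linarith
    exact lt_of_lt_of_le h2 (le_trans h3 (hTleS (m + 1) i))
  -- choose K so that T K is positive on all of C
  have hmex : ∀ i : Fin n, ∃ m, i ∈ C → 0 < (Q ^ m) i j0 := by
    intro i
    by_cases hiC : i ∈ C
    · obtain ⟨m, hm⟩ := class_path_pos hpos hclass hiC hj0C
      exact ⟨m, fun _ => hm⟩
    · exact ⟨0, fun h => absurd h hiC⟩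
  choose f hf using hmex
  set K : ℕ := Finset.univ.sup f + 1 with hKdef
  have hK1 : 1 ≤ K := Nat.le_add_left 1 _
  have hTKpos : ∀ i, i ∈ C → 0 < T K i := by
    intro i hiC
    have hfi : f i + 1 ≤ K := by
      have := Finset.le_sup (f := f) (Finset.mem_univ i)
      omega
    have h1 : ((Q ^ (f i)).mulVec G) i ≥ (Q ^ (f i)) i j0 * G j0 := by
      have : ((Q ^ (f i)).mulVec G) i = ∑ l, (Q ^ (f i)) i l * G l := by
        simp [Matrix.mulVec, dotProduct]
      rw [this]
      refine Finset.single_le_sum (f := fun l => (Q ^ (f i)) i l * G l) ?_ (Finset.mem_univ j0)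
      exact fun l _ => mul_nonneg (pow_entry_nonneg Q hQnn _ i l) (hG0 l)
    have h2 : 0 < ((Q ^ (f i)).mulVec G) i :=
      lt_of_lt_of_le (mul_pos (hf i hiC) hj0pos) h1
    have h3 : ((Q ^ (f i)).mulVec G) i ≤ T (f i + 1) i := by
      simp only [hTdef, Finset.sum_range_succ, Finset.sum_apply, Pi.add_apply]
      have : 0 ≤ ∑ m' ∈ Finset.range (f i), ((Q ^ m').mulVec G) i := by
        apply Finset.sum_nonneg
        exact fun m' _ => mulVec_nonneg _ (pow_entry_nonneg Q hQnn m') hG0 i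
      linarith
    exact lt_of_lt_of_le h2 (le_trans h3 (hTmono i hfi))
  -- extremal quantities over C
  set F : Finset (Fin n) := Finset.univ.filter (fun i => i ∈ C) with hFdef
  have hFne : F.Nonempty := ⟨j0, by simp [hFdef, hj0C]⟩
  have hmemF : ∀ i, i ∈ F ↔ i ∈ C := by intro i; simp [hFdef]
  set δ : ℝ := F.inf' hFne (fun i => T K i) with hδdef
  set M : ℝ := F.sup' hFne S with hMdef
  set s : ℝ := F.inf' hFne S with hsdef
  have hδpos : 0 < δ := by
    rw [hδdef, Finset.lt_inf'_iff]
    exact fun i hi => hTKpos i ((hmemF i).1 hi)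
  have hspos : 0 < s := by
    rw [hsdef, Finset.lt_inf'_iff]
    exact fun i hi => hSposC i ((hmemF i).1 hi)
  have hsleM : s ≤ M := le_trans (Finset.inf'_le _ hFne.choose_spec)
    (Finset.le_sup' _ hFne.choose_spec)
  have hMpos : 0 < M := lt_of_lt_of_le hspos hsleM
  have hδleM : δ ≤ M := by
    refine le_trans (Finset.inf'_le _ hFne.choose_spec) ?_
    refine le_trans ?_ (Finset.le_sup' _ hFne.choose_spec)
    exact hTleS K _
  set θ : ℝ := 1 - δ / M with hθdef
  have hθ0 : 0 ≤ θ := by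
    rw [hθdef]
    have : δ / M ≤ 1 := (div_le_one hMpos).2 hδleM
    linarith
  have hθ1 : θ < 1 := by
    rw [hθdef]
    have : 0 < δ / M := div_pos hδpos hMpos
    linarith
  -- contraction
  have hSleM : ∀ i, S i ≤ M := by
    intro i
    by_cases hiC : i ∈ C
    · exact Finset.le_sup' _ ((hmemF i).2 hiC)
    · rw [hSzero i hiC]; exact le_of_lt hMpos
  have hcontr : ∀ i, ((Q ^ K).mulVec S) i ≤ θ * S i := by
    intro i
    have e := congrFun (hQSk K) i
    rw [e]
    simp only [Pi.sub_apply]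
    by_cases hiC : i ∈ C
    · have h1 : δ ≤ T K i := Finset.inf'_le _ ((hmemF i).2 hiC)
      have h2 : (δ / M) * S i ≤ δ := by
        rw [div_mul_eq_mul_div, div_le_iff₀ hMpos]
        have := hSleM i
        nlinarith [hSnn i]
      rw [hθdef]
      nlinarith
    · rw [hSzero i hiC, hTzero K i hiC]
      simp
  -- iterate the contraction
  have hiter : ∀ m i, ((Q ^ (K * m)).mulVec S) i ≤ θ ^ m * S i := by
    intro m
    induction m with
    | zero => intro i; simp [Matrix.one_mulVec]
    | succ m ih =>
      intro i
      have e : Q ^ (K * (m + 1)) = Q ^ (K * m) * Q ^ K := by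
        rw [← pow_add]
        ring_nf
      rw [e, ← Matrix.mulVec_mulVec]
      have step1 : ((Q ^ (K * m)).mulVec ((Q ^ K).mulVec S)) i
          ≤ ((Q ^ (K * m)).mulVec (fun j => θ * S j)) i :=
        mulVec_mono _ (pow_entry_nonneg Q hQnn _) (fun j => hcontr j) i
      refine le_trans step1 ?_
      have e2 : ((Q ^ (K * m)).mulVec (fun j => θ * S j)) i
          = θ * ((Q ^ (K * m)).mulVec S) i := by
        simp [Matrix.mulVec, dotProduct, Finset.mul_sum]
        exact Finset.sum_congr rfl fun j _ => by ring
      rw [e2]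
      calc θ * ((Q ^ (K * m)).mulVec S) i ≤ θ * (θ ^ m * S i) :=
            mul_le_mul_of_nonneg_left (ih i) hθ0
        _ = θ ^ (m + 1) * S i := by ring
  -- entrywise geometric decay
  have hent : ∀ (m : ℕ) (a b : Fin n), a ∈ C → b ∈ C →
      ((restr P C) ^ (K * m)) a b ≤ (M / s) * θ ^ m := by
    intro m a b haC hbC
    have h1 : ((Q ^ (K * m)) a b) * s ≤ ((Q ^ (K * m)) a b) * S b := by
      apply mul_le_mul_of_nonneg_left _ (pow_entry_nonneg Q hQnn _ a b)
      exact Finset.inf'_le _ ((hmemF b).2 hbC)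
    have h2 : ((Q ^ (K * m)) a b) * S b ≤ ((Q ^ (K * m)).mulVec S) a := by
      have : ((Q ^ (K * m)).mulVec S) a = ∑ l, (Q ^ (K * m)) a l * S l := by
        simp [Matrix.mulVec, dotProduct]
      rw [this]
      refine Finset.single_le_sum (f := fun l => (Q ^ (K * m)) a l * S l) ?_ (Finset.mem_univ b)
      exact fun l _ => mul_nonneg (pow_entry_nonneg Q hQnn _ a l) (hSnn l)
    have h3 : ((Q ^ (K * m)).mulVec S) a ≤ θ ^ m * M :=
      le_trans (hiter m a) (mul_le_mul_of_nonneg_left (hSleM a) (by positivity))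
    have h4 : ((Q ^ (K * m)) a b) * s ≤ θ ^ m * M := le_trans h1 (le_trans h2 h3)
    rw [div_mul_eq_mul_div, le_div_iff₀ hspos]
    calc ((restr P C) ^ (K * m)) a b * s = ((Q ^ (K * m)) a b) * s := by rw [← hQdef]
      _ ≤ θ ^ m * M := h4
      _ = M * θ ^ m := by ring
  have hMsnn : 0 ≤ M / s := le_of_lt (div_pos hMpos hspos)
  exact absurd hcrit (specRadOn_ne_one P C hpos K hK1 (M / s) θ hMsnn hθ0 hθ1 hent)

end LB

section Bridge

/-- If the `P`-partial sums of a nonnegative `g` are bounded, then all iterates of `g`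
vanish on every critical class. -/
lemma critA {n : ℕ} (P : Matrix (Fin n) (Fin n) ℝ) (hpos : ∀ i j, 0 ≤ P i j)
    {C : Set (Fin n)} (hcc : IsCriticalClass P C)
    (g : Fin n → ℝ) (hg : ∀ i, 0 ≤ g i) (L : ℝ)
    (hL : ∀ k i, (∑ m ∈ Finset.range k, (P ^ m).mulVec g) i ≤ L) :
    ∀ (t : ℕ), ∀ j ∈ C, ((P ^ t).mulVec g) j = 0 := by
  intro t j hjC
  have hclass : ∃ i0, C = {j | Relation.ReflTransGen (fun a b => 0 < P a b) i0 j ∧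
      Relation.ReflTransGen (fun a b => 0 < P a b) j i0} := hcc.1
  have hgt : ∀ i, 0 ≤ ((P ^ t).mulVec g) i :=
    fun i => mulVec_nonneg _ (pow_entry_nonneg P hpos t) hg i
  set G : Fin n → ℝ := fun i => if i ∈ C then ((P ^ t).mulVec g) i else 0 with hGdef
  have hG0 : ∀ i, 0 ≤ G i := by
    intro i; rw [hGdef]; dsimp; split
    · exact hgt i
    · exact le_refl 0
  have hGsupp : ∀ i, i ∉ C → G i = 0 := by
    intro i hi; rw [hGdef]; simp [hi]
  have hGle : ∀ i, G i ≤ ((P ^ t).mulVec g) i := by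
    intro i; rw [hGdef]; dsimp; split
    · exact le_refl _
    · exact hgt i
  -- partial sums of the restricted iteration are bounded
  have hLres : ∀ k i, (∑ m ∈ Finset.range k, ((restr P C) ^ m).mulVec G) i ≤ L := by
    intro k i
    have hterm : ∀ m, (((restr P C) ^ m).mulVec G) i ≤ ((P ^ (t + m)).mulVec g) i := by
      intro m
      have h1 : (((restr P C) ^ m).mulVec G) i ≤ ((P ^ m).mulVec ((P ^ t).mulVec g)) i := by
        simp only [Matrix.mulVec, dotProduct]
        refine Finset.sum_le_sum fun l _ => ?_
        have e1 : ((restr P C) ^ m) i l ≤ (P ^ m) i l :=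
          pow_entry_mono _ _ (restr_nonneg P C hpos) (restr_le P C hpos) m i l
        have e2 : 0 ≤ ((restr P C) ^ m) i l :=
          pow_entry_nonneg _ (restr_nonneg P C hpos) m i l
        calc ((restr P C) ^ m) i l * G l ≤ ((restr P C) ^ m) i l * ((P ^ t).mulVec g) l :=
              mul_le_mul_of_nonneg_left (hGle l) e2
          _ ≤ (P ^ m) i l * ((P ^ t).mulVec g) l :=
              mul_le_mul_of_nonneg_right e1 (hgt l)
      have h2 : ((P ^ m).mulVec ((P ^ t).mulVec g)) i = ((P ^ (t + m)).mulVec g) i := by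
        rw [Matrix.mulVec_mulVec, ← pow_add, add_comm]
      rw [← h2]; exact h1
    have hsum : (∑ m ∈ Finset.range k, ((restr P C) ^ m).mulVec G) i
        ≤ ∑ m ∈ Finset.range k, ((P ^ (t + m)).mulVec g) i := by
      simp only [Finset.sum_apply]
      exact Finset.sum_le_sum fun m _ => hterm m
    refine le_trans hsum ?_
    have e3 : ∑ m ∈ Finset.range k, ((P ^ (t + m)).mulVec g) i
        = ∑ m' ∈ Finset.Ico t (t + k), ((P ^ m').mulVec g) i := by
      rw [Finset.sum_Ico_eq_sum_range]
      simp
    rw [e3]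
    have e4 : ∑ m' ∈ Finset.Ico t (t + k), ((P ^ m').mulVec g) i
        ≤ ∑ m' ∈ Finset.range (t + k), ((P ^ m').mulVec g) i := by
      apply Finset.sum_le_sum_of_subset_of_nonneg
      · intro x hx
        simp only [Finset.mem_Ico] at hx
        simp [hx.2]
      · intro x _ _
        exact mulVec_nonneg _ (pow_entry_nonneg P hpos x) hg i
    refine le_trans e4 ?_
    have := hL (t + k) i
    simpa [Finset.sum_apply] using this
  have := crit_bounded_partial_sums_zero P hpos hclass hcc.2 G hG0 hGsupp L hLres j
  rw [hGdef] at this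
  simpa [hjC] using this

/-- iterates of `g` vanish on every node accessible from a critical node. -/
lemma zeroAcc {n : ℕ} (P : Matrix (Fin n) (Fin n) ℝ) (hpos : ∀ i j, 0 ≤ P i j)
    (g : Fin n → ℝ) (hg : ∀ i, 0 ≤ g i) (L : ℝ)
    (hL : ∀ k i, (∑ m ∈ Finset.range k, (P ^ m).mulVec g) i ≤ L)
    (i : Fin n) (hacc : ∃ j ∈ CriticalNodes P, AccessM P j i) :
    ∀ t : ℕ, ((P ^ t).mulVec g) i = 0 := by
  intro t
  obtain ⟨j, ⟨C, hcc, hjC⟩, hji⟩ := hacc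
  obtain ⟨r, hr⟩ := access_pos_pow P hpos hji
  have hz : ((P ^ (r + t)).mulVec g) j = 0 := critA P hpos hcc g hg L hL (r + t) j hjC
  have hsplit : ((P ^ (r + t)).mulVec g) j = ∑ l, (P ^ r) j l * ((P ^ t).mulVec g) l := by
    rw [pow_add, ← Matrix.mulVec_mulVec]
    simp [Matrix.mulVec, dotProduct]
  have hterm : ∀ l, 0 ≤ (P ^ r) j l * ((P ^ t).mulVec g) l :=
    fun l => mul_nonneg (pow_entry_nonneg P hpos r j l)
      (mulVec_nonneg _ (pow_entry_nonneg P hpos t) hg l)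
  have hall : ∀ l ∈ Finset.univ, (P ^ r) j l * ((P ^ t).mulVec g) l = 0 := by
    have := hsplit ▸ hz
    exact fun l hl => (Finset.sum_eq_zero_iff_of_nonneg fun l _ => hterm l).1 this l hl
  have := hall i (Finset.mem_univ i)
  rcases mul_eq_zero.1 this with h | h
  · exact absurd h (ne_of_gt hr)
  · exact h

end Bridge
end Stmt9Aux

open Stmt9Aux in
/-- if P is a nonnegative stable matrix and P z ≤ z, then the critical
part of z is fixed by the critical principal submatrix and z vanishes on the
downstream nodes. -/
theorem stmt9 {n : ℕ} (P : Matrix (Fin n) (Fin n) ℝ)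
    (hpos : ∀ i j, 0 ≤ P i j) (hstab : MatStable P)
    (z : Fin n → ℝ) (hz : P.mulVec z ≤ z) :
    (∀ i ∈ CriticalNodes P,
      ∑ j ∈ Finset.univ.filter (fun j => j ∈ CriticalNodes P), P i j * z j = z i) ∧
    (∀ i, i ∉ CriticalNodes P → (∃ j ∈ CriticalNodes P, AccessM P j i) → z i = 0) := by
  obtain ⟨cz, hcz⟩ := coord_bound P hstab z
  set w : Fin n → ℝ := z - P.mulVec z with hwdef
  have hw0 : ∀ i, 0 ≤ w i := by
    intro i
    simp only [hwdef, Pi.sub_apply]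
    exact sub_nonneg.2 (hz i)
  have hz0 : ∀ i, |z i| ≤ cz := by
    intro i
    have := hcz 0 i
    simpa [Matrix.one_mulVec] using this
  have hLw : ∀ k i, (∑ m ∈ Finset.range k, (P ^ m).mulVec w) i ≤ 2 * cz := by
    intro k i
    rw [hwdef, telescope P z k]
    have h1 := (abs_le.1 (hz0 i)).2
    have h2 := (abs_le.1 (hcz k i)).1
    simp only [Pi.sub_apply]
    linarith
  have hzW : ∀ i, (∃ j ∈ CriticalNodes P, AccessM P j i) → ∀ t, ((P ^ t).mulVec w) i = 0 :=
    fun i hacc t => zeroAcc P hpos w hw0 (2 * cz) hLw i hacc t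
  -- the limit y of the iterates of z
  have hanti : ∀ i, Antitone fun k => ((P ^ k).mulVec z) i := by
    intro i
    apply antitone_nat_of_succ_le
    intro k
    have e : (P ^ (k + 1)).mulVec z = (P ^ k).mulVec (P.mulVec z) := by
      rw [Matrix.mulVec_mulVec, ← pow_succ]
    rw [e]
    exact mulVec_mono _ (pow_entry_nonneg P hpos k) hz i
  have hbddb : ∀ i, BddBelow (Set.range fun k => ((P ^ k).mulVec z) i) := by
    intro i
    refine ⟨-cz, ?_⟩
    rintro x ⟨k, rfl⟩
    exact (abs_le.1 (hcz k i)).1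
  set y : Fin n → ℝ := fun i => ⨅ k, ((P ^ k).mulVec z) i with hydef
  have hyT : ∀ i, Tendsto (fun k => ((P ^ k).mulVec z) i) atTop (𝓝 (y i)) :=
    fun i => tendsto_atTop_ciInf (hanti i) (hbddb i)
  have hPy : P.mulVec y = y := by
    funext i
    have l1 : Tendsto (fun k => ((P ^ (k + 1)).mulVec z) i) atTop (𝓝 (y i)) :=
      (hyT i).comp (tendsto_add_atTop_nat 1)
    have e : ∀ k, ((P ^ (k + 1)).mulVec z) i = ∑ j, P i j * ((P ^ k).mulVec z) j := by
      intro k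
      rw [pow_succ', ← Matrix.mulVec_mulVec]
      simp [Matrix.mulVec, dotProduct]
    have l2 : Tendsto (fun k => ∑ j, P i j * ((P ^ k).mulVec z) j) atTop
        (𝓝 (∑ j, P i j * y j)) :=
      tendsto_finset_sum _ fun j _ => (hyT j).const_mul _
    rw [funext e] at l1
    have := tendsto_nhds_unique l1 l2
    have e4 : P.mulVec y i = ∑ j, P i j * y j := by
      simp [Matrix.mulVec, dotProduct]
    rw [e4, ← this]
  have hzy : ∀ i, (∃ j ∈ CriticalNodes P, AccessM P j i) → z i = y i := by
    intro i hacc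
    have hconst : ∀ k, ((P ^ k).mulVec z) i = z i := by
      intro k
      have ht := congrFun (telescope P z k) i
      rw [← hwdef] at ht
      have hzero : (∑ m ∈ Finset.range k, (P ^ m).mulVec w) i = 0 := by
        simp only [Finset.sum_apply]
        exact Finset.sum_eq_zero fun m _ => hzW i hacc m
      rw [hzero] at ht
      simp only [Pi.sub_apply] at ht
      linarith [ht.symm]
    have : (fun k => ((P ^ k).mulVec z) i) = fun _ => z i := funext hconst
    have l1 := hyT i
    rw [this] at l1
    exact (tendsto_nhds_unique tendsto_const_nhds l1)
  -- the absolute value of y is subinvariant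
  set v : Fin n → ℝ := fun i => |y i| with hvdef
  have hv0 : ∀ i, 0 ≤ v i := fun i => abs_nonneg _
  have hv : ∀ i, v i ≤ (P.mulVec v) i := by
    intro i
    have e1 : v i = |(P.mulVec y) i| := by rw [hPy]
    rw [e1]
    have e2 : (P.mulVec y) i = ∑ j, P i j * y j := by
      simp [Matrix.mulVec, dotProduct]
    have e3 : (P.mulVec v) i = ∑ j, P i j * |y j| := by
      simp [Matrix.mulVec, dotProduct, hvdef]
    rw [e2, e3]
    refine le_trans (Finset.abs_sum_le_sum_abs _ _) ?_
    refine Finset.sum_le_sum fun j _ => ?_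
    rw [abs_mul, abs_of_nonneg (hpos i j)]
  obtain ⟨cv, hcv⟩ := coord_bound P hstab v
  -- the increasing iterates of v and their limit
  have hmonov : ∀ i, Monotone fun k => ((P ^ k).mulVec v) i := by
    intro i
    apply monotone_nat_of_le_succ
    intro k
    have e : (P ^ (k + 1)).mulVec v = (P ^ k).mulVec (P.mulVec v) := by
      rw [Matrix.mulVec_mulVec, ← pow_succ]
    rw [e]
    exact mulVec_mono _ (pow_entry_nonneg P hpos k) (fun j => hv j) i
  have hbddav : ∀ i, BddAbove (Set.range fun k => ((P ^ k).mulVec v) i) := by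
    intro i
    refine ⟨cv, ?_⟩
    rintro x ⟨k, rfl⟩
    exact (abs_le.1 (hcv k i)).2
  set vs : Fin n → ℝ := fun i => ⨆ k, ((P ^ k).mulVec v) i with hvsdef
  have hvsT : ∀ i, Tendsto (fun k => ((P ^ k).mulVec v) i) atTop (𝓝 (vs i)) :=
    fun i => tendsto_atTop_ciSup (hmonov i) (hbddav i)
  have hPvs : P.mulVec vs = vs := by
    funext i
    have l1 : Tendsto (fun k => ((P ^ (k + 1)).mulVec v) i) atTop (𝓝 (vs i)) :=
      (hvsT i).comp (tendsto_add_atTop_nat 1)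
    have e : ∀ k, ((P ^ (k + 1)).mulVec v) i = ∑ j, P i j * ((P ^ k).mulVec v) j := by
      intro k
      rw [pow_succ', ← Matrix.mulVec_mulVec]
      simp [Matrix.mulVec, dotProduct]
    have l2 : Tendsto (fun k => ∑ j, P i j * ((P ^ k).mulVec v) j) atTop
        (𝓝 (∑ j, P i j * vs j)) :=
      tendsto_finset_sum _ fun j _ => (hvsT j).const_mul _
    rw [funext e] at l1
    have := tendsto_nhds_unique l1 l2
    have e4 : P.mulVec vs i = ∑ j, P i j * vs j := by
      simp [Matrix.mulVec, dotProduct]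
    rw [e4, ← this]
  have hvvs : ∀ i, v i ≤ vs i := by
    intro i
    have h0 : ((P ^ 0).mulVec v) i = v i := by simp [Matrix.one_mulVec]
    rw [← h0]
    exact le_ciSup (hbddav i) 0
  have hvs0 : ∀ i, 0 ≤ vs i := fun i => le_trans (hv0 i) (hvvs i)
  have hvscv : ∀ i, vs i ≤ cv := by
    intro i
    refine ciSup_le fun k => (abs_le.1 (hcv k i)).2
  -- on each critical class, the outflow of vs vanishes
  have hrstar : ∀ (C : Set (Fin n)), IsCriticalClass P C →
      ∀ p ∈ C, ∀ l, l ∉ C → P p l * vs l = 0 := by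
    intro C hcc p hpC l hlC
    set V : Fin n → ℝ := fun i => if i ∈ C then vs i else 0 with hVdef
    have hV0 : ∀ i, 0 ≤ V i := by
      intro i; rw [hVdef]; dsimp; split
      · exact hvs0 i
      · exact le_refl 0
    have hVvs : ∀ i, V i ≤ vs i := by
      intro i; rw [hVdef]; dsimp; split
      · exact le_refl _
      · exact hvs0 i
    have hRV : ∀ i, ((restr P C).mulVec V) i = ∑ l', restr P C i l' * vs l' := by
      intro i
      simp only [Matrix.mulVec, dotProduct]
      refine Finset.sum_congr rfl fun l' _ => ?_
      by_cases hl' : l' ∈ C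
      · rw [hVdef]; simp [hl']
      · have : restr P C i l' = 0 := by unfold restr; simp [hl']
        rw [this, zero_mul, zero_mul]
    have hRVle : ∀ i, ((restr P C).mulVec V) i ≤ ∑ l', P i l' * vs l' := by
      intro i
      rw [hRV i]
      exact Finset.sum_le_sum fun l' _ =>
        mul_le_mul_of_nonneg_right (restr_le P C hpos i l') (hvs0 l')
    have hPvs' : ∀ i, ∑ l', P i l' * vs l' = vs i := by
      intro i
      have := congrFun hPvs i
      simpa [Matrix.mulVec, dotProduct] using this
    set G2 : Fin n → ℝ := V - (restr P C).mulVec V with hG2def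
    have hG20 : ∀ i, 0 ≤ G2 i := by
      intro i
      simp only [hG2def, Pi.sub_apply]
      by_cases hiC : i ∈ C
      · have e1 : V i = vs i := by rw [hVdef]; simp [hiC]
        rw [e1]
        have := hRVle i
        rw [hPvs' i] at this
        linarith
      · have e1 : V i = 0 := by rw [hVdef]; simp [hiC]
        have e2 : ((restr P C).mulVec V) i = 0 := by
          rw [hRV i]
          refine Finset.sum_eq_zero fun l' _ => ?_
          have : restr P C i l' = 0 := by unfold restr; simp [hiC]
          rw [this, zero_mul]
        rw [e1, e2]
        simp
    have hG2supp : ∀ i, i ∉ C → G2 i = 0 := by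
      intro i hiC
      simp only [hG2def, Pi.sub_apply]
      have e1 : V i = 0 := by rw [hVdef]; simp [hiC]
      have e2 : ((restr P C).mulVec V) i = 0 := by
        rw [hRV i]
        refine Finset.sum_eq_zero fun l' _ => ?_
        have : restr P C i l' = 0 := by unfold restr; simp [hiC]
        rw [this, zero_mul]
      rw [e1, e2, sub_zero]
    have hLG2 : ∀ k i, (∑ m ∈ Finset.range k, ((restr P C) ^ m).mulVec G2) i ≤ cv := by
      intro k i
      have ht := congrFun (telescope (restr P C) V k) i
      rw [← hG2def] at ht
      rw [ht]
      have h1 : 0 ≤ (((restr P C) ^ k).mulVec V) i :=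
        mulVec_nonneg _ (pow_entry_nonneg _ (restr_nonneg P C hpos) k) hV0 i
      have h2 : V i ≤ cv := le_trans (hVvs i) (hvscv i)
      simp only [Pi.sub_apply]
      linarith
    have hG2zero := crit_bounded_partial_sums_zero P hpos hcc.1 hcc.2 G2 hG20 hG2supp cv hLG2
    -- now extract: for p ∈ C the outflow sum vanishes
    have hout : ∑ l' ∈ Finset.univ.filter (fun l' => l' ∉ C), P p l' * vs l' = 0 := by
      have e1 : G2 p = vs p - ∑ l' ∈ Finset.univ.filter (fun l' => l' ∈ C), P p l' * vs l' := by
        simp only [hG2def, Pi.sub_apply]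
        have e2 : V p = vs p := by rw [hVdef]; simp [hpC]
        rw [e2, hRV p]
        congr 1
        rw [← Finset.sum_filter_add_sum_filter_not Finset.univ (fun l' => l' ∈ C)
          (fun l' => restr P C p l' * vs l')]
        have ez : ∑ l' ∈ Finset.univ.filter (fun l' => ¬ l' ∈ C),
            restr P C p l' * vs l' = 0 := by
          refine Finset.sum_eq_zero fun l' hl' => ?_
          simp only [Finset.mem_filter] at hl'
          have : restr P C p l' = 0 := by unfold restr; simp [hl'.2]
          rw [this, zero_mul]
        rw [ez, add_zero]
        refine Finset.sum_congr rfl fun l' hl' => ?_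
        simp only [Finset.mem_filter] at hl'
        have : restr P C p l' = P p l' := by unfold restr; simp [hpC, hl'.2]
        rw [this]
      have e3 : vs p = (∑ l' ∈ Finset.univ.filter (fun l' => l' ∈ C), P p l' * vs l')
          + ∑ l' ∈ Finset.univ.filter (fun l' => ¬ l' ∈ C), P p l' * vs l' := by
        rw [Finset.sum_filter_add_sum_filter_not Finset.univ (fun l' => l' ∈ C)
          (fun l' => P p l' * vs l')]
        exact (hPvs' p).symm
      have := hG2zero p
      rw [e1] at this
      linarith [e3]
    have hterms : ∀ l' ∈ Finset.univ.filter (fun l' => l' ∉ C), P p l' * vs l' = 0 := by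
      refine (Finset.sum_eq_zero_iff_of_nonneg fun l' _ => ?_).1 hout
      exact mul_nonneg (hpos p l') (hvs0 l')
    exact hterms l (by simp [hlC])
  -- propagation of zeros of vs along edges
  have hfix0 : ∀ p q, vs p = 0 → 0 < P p q → vs q = 0 := by
    intro p q hp hpq
    have e := congrFun hPvs p
    have e2 : ∑ l, P p l * vs l = 0 := by
      rw [← hp]
      simpa [Matrix.mulVec, dotProduct] using e
    have := (Finset.sum_eq_zero_iff_of_nonneg
      (fun l (_ : l ∈ Finset.univ) => mul_nonneg (hpos p l) (hvs0 l))).1 e2 q (Finset.mem_univ q)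
    rcases mul_eq_zero.1 this with h | h
    · exact absurd h (ne_of_gt hpq)
    · exact h
  -- vs vanishes strictly downstream of each critical class
  have hpath : ∀ (C : Set (Fin n)), IsCriticalClass P C → ∀ j ∈ C, ∀ i,
      AccessM P j i → i ∈ C ∨ vs i = 0 := by
    intro C hcc j hjC i hacc
    induction hacc with
    | refl => exact Or.inl hjC
    | @tail p q hp hpq ih =>
      rcases ih with hpC | hvp
      · by_cases hqC : q ∈ C
        · exact Or.inl hqC
        · right
          have := hrstar C hcc p hpC q hqC
          rcases mul_eq_zero.1 this with h | h
          · exact absurd h (ne_of_gt hpq)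
          · exact h
      · exact Or.inr (hfix0 p q hvp hpq)
  -- part 2
  have hpart2 : ∀ i, i ∉ CriticalNodes P → (∃ j ∈ CriticalNodes P, AccessM P j i) →
      z i = 0 := by
    intro i hiC hacc
    obtain ⟨j, hjCrit, hji⟩ := hacc
    obtain ⟨C, hcc, hjC⟩ := hjCrit
    have h1 : i ∈ C ∨ vs i = 0 := hpath C hcc j hjC i hji
    have hvsi : vs i = 0 := by
      rcases h1 with h | h
      · exact absurd ⟨C, hcc, h⟩ hiC
      · exact h
    have hvi : v i = 0 := le_antisymm (by rw [← hvsi]; exact hvvs i) (hv0 i)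
    have hyi : y i = 0 := by
      have : |y i| = 0 := hvi
      exact abs_eq_zero.1 this
    rw [hzy i ⟨j, ⟨C, hcc, hjC⟩, hji⟩, hyi]
  refine ⟨?_, hpart2⟩
  -- part 1
  intro i hiCrit
  have hwi : w i = 0 := by
    have := hzW i ⟨i, hiCrit, Relation.ReflTransGen.refl⟩ 0
    simpa [Matrix.one_mulVec] using this
  have hPzi : ∑ j, P i j * z j = z i := by
    have : (P.mulVec z) i = z i := by
      simp only [hwdef, Pi.sub_apply] at hwi
      linarith
    simpa [Matrix.mulVec, dotProduct] using this
  have hzero : ∑ j ∈ Finset.univ.filter (fun j => ¬ j ∈ CriticalNodes P), P i j * z j = 0 := by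
    refine Finset.sum_eq_zero fun j hj => ?_
    simp only [Finset.mem_filter] at hj
    rcases eq_or_lt_of_le (hpos i j) with h | h
    · rw [← h, zero_mul]
    · have hzj : z j = 0 :=
        hpart2 j hj.2 ⟨i, hiCrit, Relation.ReflTransGen.single h⟩
      rw [hzj, mul_zero]
  have hsp := Finset.sum_filter_add_sum_filter_not Finset.univ
    (fun j => j ∈ CriticalNodes P) (fun j => P i j * z j)
  rw [hzero, add_zero] at hsp
  rw [hsp]
  exact hPzi
end
end
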